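/- arXiv:2307.01078 — 5 statements merged into one kernel-verified Lean document; each statement's English description precedes it below -/
import Mathlib

section
/- Uniqueness of symplectic eigenvalues: Let A be a 2n×2n real positive definite matrix. If S and T are 2n×2n real symplectic matrices and D, E are n×n diagonal matrices with positive diagonal entries arranged in nondecreasing order such that SᵀAS = D ⊕ D and TᵀAT = E ⊕ E, then D = E. -/
open Matrix
open scoped Matrix.Norms.L2Operator Classical

/-- The canonical symplectic form matrix `((0, Iₘ), (−Iₘ, 0))` (the paper's `J₂ₘ`). -/
def J' (m : Type*) [Fintype m] [DecidableEq m] : Matrix (m ⊕ m) (m ⊕ m) ℝ :=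
  Matrix.fromBlocks 0 1 (-1) 0

open Polynomial in
lemma multiset_eq_of_prod_eq (s u : Multiset ℝ) (hs : ∀ a ∈ s, 0 < a) (hu : ∀ a ∈ u, 0 < a)
    (h : (s.map fun (a : ℝ) => (X ^ 2 + C ((a : ℂ) ^ 2) : ℂ[X])).prod
      = (u.map fun (a : ℝ) => (X ^ 2 + C ((a : ℂ) ^ 2) : ℂ[X])).prod) : s = u := by
  induction s using Multiset.induction_on generalizing u with
  | empty =>
    by_contra hne
    obtain ⟨b, hb⟩ := Multiset.exists_mem_of_ne_zero (fun h0 => hne h0.symm)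
    have h0 : ((u.map fun (a : ℝ) => (X ^ 2 + C ((a : ℂ) ^ 2) : ℂ[X])).prod).eval ((b : ℂ) * Complex.I) = 0 := by
      rw [Polynomial.eval_multiset_prod]
      refine Multiset.prod_eq_zero ?_
      rw [Multiset.map_map]
      refine Multiset.mem_map.mpr ⟨b, hb, ?_⟩
      simp [mul_pow, Complex.I_sq]
    rw [← h] at h0
    simp at h0
  | cons a s ih =>
    -- evaluate at a*I to find a ∈ u
    have h0 : ((u.map fun (a : ℝ) => (X ^ 2 + C ((a : ℂ) ^ 2) : ℂ[X])).prod).eval ((a : ℂ) * Complex.I) = 0 := by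
      rw [← h, Multiset.map_cons, Multiset.prod_cons, Polynomial.eval_mul]
      have : (X ^ 2 + C ((a : ℂ) ^ 2) : ℂ[X]).eval ((a : ℂ) * Complex.I) = 0 := by
        simp [mul_pow, Complex.I_sq]
      rw [this, zero_mul]
    rw [Polynomial.eval_multiset_prod, Multiset.map_map] at h0
    obtain ⟨x, hxu, hx0⟩ := Multiset.mem_map.mp (Multiset.prod_eq_zero_iff.mp h0)
    have hxa : x = a := by
      have ha := hs a (Multiset.mem_cons_self a s)
      have hx := hu x hxu
      simp only [Function.comp_apply, Polynomial.eval_add, Polynomial.eval_pow,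
        Polynomial.eval_X, Polynomial.eval_C, mul_pow, Complex.I_sq] at hx0
      have : (x : ℂ) ^ 2 = (a : ℂ) ^ 2 := by linear_combination hx0
      have h2 : x ^ 2 = a ^ 2 := by exact_mod_cast this
      rcases sq_eq_sq_iff_eq_or_eq_neg.mp h2 with h' | h'
      · exact h'
      · nlinarith
    subst hxa
    have hu' : u = x ::ₘ u.erase x := (Multiset.cons_erase hxu).symm
    rw [hu', Multiset.map_cons, Multiset.prod_cons, Multiset.map_cons, Multiset.prod_cons] at h
    have hfne : (X ^ 2 + C ((x : ℂ) ^ 2) : ℂ[X]) ≠ 0 :=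
      (Polynomial.monic_X_pow_add_C _ two_ne_zero).ne_zero
    have h' := mul_left_cancel₀ hfne h
    rw [hu']
    congr 1
    exact ih (u.erase x) (fun a ha => hs a (Multiset.mem_cons_of_mem ha))
      (fun a ha => hu a (Multiset.mem_of_mem_erase ha)) h'

lemma det_special (n : ℕ) (w : Fin n → ℂ) (t : ℂ) :
    (fromBlocks (diagonal fun _ => t) (-(diagonal w)) (diagonal w) (diagonal fun _ => t)).det
      = ∏ i, (t ^ 2 + w i ^ 2) := by
  set M : Matrix (Fin n ⊕ Fin n) (Fin n ⊕ Fin n) ℂ :=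
    fromBlocks (diagonal fun _ => t) (-(diagonal w)) (diagonal w) (diagonal fun _ => t) with hM
  set L : Matrix (Fin n ⊕ Fin n) (Fin n ⊕ Fin n) ℂ :=
    fromBlocks 1 (diagonal fun _ => -Complex.I) 0 1 with hL
  set R : Matrix (Fin n ⊕ Fin n) (Fin n ⊕ Fin n) ℂ :=
    fromBlocks 1 (diagonal fun _ => Complex.I) 0 1 with hR
  have hLdet : L.det = 1 := by rw [hL, det_fromBlocks_zero₂₁]; simp
  have hRdet : R.det = 1 := by rw [hR, det_fromBlocks_zero₂₁]; simp
  have key : L * M * R = fromBlocks (diagonal fun i => t - Complex.I * w i) 0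
      (diagonal w) (diagonal fun i => t + Complex.I * w i) := by
    rw [hL, hM, hR, fromBlocks_multiply, fromBlocks_multiply]
    simp only [Matrix.one_mul, Matrix.mul_one, Matrix.zero_mul, Matrix.mul_zero, add_zero,
      zero_add, Matrix.neg_mul, Matrix.mul_neg, diagonal_mul_diagonal, Matrix.diagonal_neg,
      ← Matrix.diagonal_add, ← Matrix.diagonal_neg, sub_eq_add_neg]
    rw [fromBlocks_inj]
    refine ⟨rfl, ?_, rfl, ?_⟩
    · rw [← Matrix.diagonal_zero]
      simp only [Matrix.add_mul, Matrix.neg_mul, diagonal_mul_diagonal, Matrix.diagonal_neg,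
        Matrix.diagonal_add, diagonal_eq_diagonal_iff]
      intro i; ring_nf; rw [Complex.I_sq]; ring
    · simp only [neg_zero, zero_add, Matrix.diagonal_add, diagonal_eq_diagonal_iff]
      intro i; ring
  have hdet : M.det = (L * M * R).det := by
    rw [det_mul, det_mul, hLdet, hRdet, one_mul, mul_one]
  rw [hdet, key, det_fromBlocks_zero₁₂, det_diagonal, det_diagonal, ← Finset.prod_mul_distrib]
  refine Finset.prod_congr rfl fun i _ => ?_
  have : Complex.I ^ 2 = -1 := Complex.I_sq
  ring_nf
  rw [this]
  ring

lemma key_det (n : ℕ) (A S : Matrix (Fin n ⊕ Fin n) (Fin n ⊕ Fin n) ℝ) (d : Fin n → ℝ)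
    (hS : Sᵀ * J' (Fin n) * S = J' (Fin n))
    (hSA : Sᵀ * A * S = Matrix.fromBlocks (Matrix.diagonal d) 0 0 (Matrix.diagonal d)) (t : ℂ) :
    (t • 1 - (J' (Fin n) * A).map (algebraMap ℝ ℂ)).det = ∏ i, (t ^ 2 + (d i : ℂ) ^ 2) := by
  set K := J' (Fin n) with hK
  have hKK : K * K = -1 := by
    rw [hK, J', fromBlocks_multiply]
    simp [← fromBlocks_one, fromBlocks_neg]
  have hK1 : K * -K = 1 := by rw [Matrix.mul_neg, hKK, neg_neg]
  have hKdet : IsUnit K.det :=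
    IsUnit.of_mul_eq_one (-K).det (by rw [← det_mul, hK1, det_one])
  have hSdet : IsUnit S.det := by
    have hd : Sᵀ.det * K.det * S.det = K.det := by rw [← det_mul, ← det_mul, hS]
    rw [det_transpose] at hd
    have h2 : (S.det * S.det) * K.det = 1 * K.det := by linear_combination hd
    exact IsUnit.of_mul_eq_one _ (mul_right_cancel₀ hKdet.ne_zero h2)
  have h4 : (-K * Sᵀ * K) * S = 1 := by
    rw [Matrix.mul_assoc (-K) Sᵀ K, Matrix.mul_assoc (-K) (Sᵀ * K) S, hS, Matrix.neg_mul, hKK,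
      neg_neg]
  have h5 : S * (-K * Sᵀ * K) = 1 := mul_eq_one_comm.mp h4
  have h3 : S * K * Sᵀ = K := by
    have e1 : (-K * Sᵀ * K) * K = K * Sᵀ := by
      rw [Matrix.mul_assoc (-K * Sᵀ) K K, hKK, Matrix.mul_neg, Matrix.mul_one, Matrix.neg_mul,
        neg_neg]
    calc S * K * Sᵀ = S * (K * Sᵀ) := by rw [Matrix.mul_assoc]
    _ = S * ((-K * Sᵀ * K) * K) := by rw [e1]
    _ = (S * (-K * Sᵀ * K)) * K := (Matrix.mul_assoc S (-K * Sᵀ * K) K).symm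
    _ = K := by rw [h5, Matrix.one_mul]
  set Δ : Matrix (Fin n ⊕ Fin n) (Fin n ⊕ Fin n) ℝ :=
    Matrix.fromBlocks (Matrix.diagonal d) 0 0 (Matrix.diagonal d) with hΔ
  have hsim : (K * A) * S = S * (K * Δ) := by
    calc (K * A) * S = S * K * Sᵀ * A * S := by rw [h3]
    _ = S * (K * (Sᵀ * A * S)) := by simp only [Matrix.mul_assoc]
    _ = S * (K * Δ) := by rw [hSA]
  set f : ℝ →+* ℂ := algebraMap ℝ ℂ with hf
  have hmS : IsUnit ((S.map f).det) := by
    rw [← RingHom.mapMatrix_apply, ← RingHom.map_det]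
    exact hSdet.map f
  have hsimC : ((K * A).map f) * (S.map f) = (S.map f) * ((K * Δ).map f) := by
    rw [← Matrix.map_mul, ← Matrix.map_mul, hsim]
  have hconj : (K * A).map f = (S.map f) * ((K * Δ).map f) * (S.map f)⁻¹ := by
    rw [← hsimC, Matrix.mul_nonsing_inv_cancel_right _ _ hmS]
  have hshift : t • (1 : Matrix (Fin n ⊕ Fin n) (Fin n ⊕ Fin n) ℂ) - (K * A).map f
      = (S.map f) * (t • 1 - (K * Δ).map f) * (S.map f)⁻¹ := by
    rw [Matrix.mul_sub, Matrix.sub_mul, ← hconj]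
    congr 1
    rw [Matrix.mul_smul, Matrix.mul_one, Matrix.smul_mul, Matrix.mul_nonsing_inv _ hmS]
  rw [hshift, Matrix.det_conj ((Matrix.isUnit_iff_isUnit_det _).mpr hmS)]
  have hKΔ : K * Δ = fromBlocks 0 (diagonal d) (-(diagonal d)) 0 := by
    rw [hK, hΔ, J', fromBlocks_multiply]
    simp
  have hmap : (K * Δ).map f = fromBlocks 0 (diagonal fun i => (d i : ℂ))
      (-(diagonal fun i => (d i : ℂ))) 0 := by
    rw [hKΔ, fromBlocks_map, fromBlocks_inj]
    refine ⟨by ext i j; simp [hf],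
      by rw [diagonal_map (by simp [hf])]; simp [diagonal_eq_diagonal_iff, hf], ?_,
      by ext i j; simp [hf]⟩
    rw [Matrix.diagonal_neg, diagonal_map (by simp [hf]), Matrix.diagonal_neg]
    simp [diagonal_eq_diagonal_iff, hf]
  have hone : (t • (1 : Matrix (Fin n ⊕ Fin n) (Fin n ⊕ Fin n) ℂ))
      = fromBlocks (diagonal fun _ => t) 0 0 (diagonal fun _ => t) := by
    rw [← fromBlocks_one, fromBlocks_smul]
    congr 1 <;> simp [Matrix.smul_one_eq_diagonal]
  rw [hmap, hone, sub_eq_add_neg, fromBlocks_neg, fromBlocks_add]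
  simp only [add_zero, zero_add, neg_neg, neg_zero]
  exact det_special n (fun i => (d i : ℂ)) t

open Polynomial in
/-- **Uniqueness of symplectic eigenvalues**: if symplectic matrices `S`, `T` diagonalize
a positive definite `A` in Williamson's theorem with nondecreasing positive diagonals
`d` and `e`, then `d = e`. -/
theorem symplectic_eigenvalues_unique (n : ℕ)
    (A S T : Matrix (Fin n ⊕ Fin n) (Fin n ⊕ Fin n) ℝ) (hA : A.PosDef)
    (d e : Fin n → ℝ)
    (hd : Monotone d) (he : Monotone e)
    (hdpos : ∀ i, 0 < d i) (hepos : ∀ i, 0 < e i)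
    (hS : Sᵀ * J' (Fin n) * S = J' (Fin n))
    (hT : Tᵀ * J' (Fin n) * T = J' (Fin n))
    (hSA : Sᵀ * A * S = Matrix.fromBlocks (Matrix.diagonal d) 0 0 (Matrix.diagonal d))
    (hTA : Tᵀ * A * T = Matrix.fromBlocks (Matrix.diagonal e) 0 0 (Matrix.diagonal e)) :
    d = e := by
  have hdet : ∀ t : ℂ, ∏ i, (t ^ 2 + (d i : ℂ) ^ 2) = ∏ i, (t ^ 2 + (e i : ℂ) ^ 2) := fun t =>
    (key_det n A S d hS hSA t).symm.trans (key_det n A T e hT hTA t)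
  have hpq : ∏ i, ((X : ℂ[X]) ^ 2 + C ((d i : ℂ) ^ 2)) = ∏ i, ((X : ℂ[X]) ^ 2 + C ((e i : ℂ) ^ 2)) :=
    Polynomial.funext fun t => by
      simpa [Polynomial.eval_prod] using hdet t
  have hprod : ∀ w : Fin n → ℝ,
      ((↑(List.ofFn w) : Multiset ℝ).map fun (a : ℝ) => ((X : ℂ[X]) ^ 2 + C ((a : ℂ) ^ 2))).prod
        = ∏ i, ((X : ℂ[X]) ^ 2 + C ((w i : ℂ) ^ 2)) := by
    intro w
    rw [List.ofFn_eq_map, Fin.prod_univ_def]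
    simp [Multiset.map_coe, Multiset.prod_coe, List.map_map, Function.comp_def]
  have hms : (↑(List.ofFn d) : Multiset ℝ) = ↑(List.ofFn e) := by
    refine multiset_eq_of_prod_eq _ _ ?_ ?_ ?_
    · intro a ha
      obtain ⟨i, rfl⟩ := List.mem_ofFn.mp (by exact_mod_cast ha)
      exact hdpos i
    · intro a ha
      obtain ⟨i, rfl⟩ := List.mem_ofFn.mp (by exact_mod_cast ha)
      exact hepos i
    · rw [hprod d, hprod e, hpq]
  have hperm : (List.ofFn d).Perm (List.ofFn e) := Multiset.coe_eq_coe.mp hms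
  have hsd : (List.ofFn d).Pairwise (· ≤ ·) := List.pairwise_ofFn.mpr fun i j hij => hd hij.le
  have hse : (List.ofFn e).Pairwise (· ≤ ·) := List.pairwise_ofFn.mpr fun i j hij => he hij.le
  exact List.ofFn_injective (List.Perm.eq_of_pairwise' hsd hse hperm)
end

section
/- Symplectic concatenation criterion: Let k + ℓ ≤ n, let M be a 2n×2k real matrix with MᵀJ₂ₙM = J₂ₖ, and let N be a 2n×2ℓ real matrix with NᵀJ₂ₙN = J₂ₗ. Then the symplectic concatenation M ⋄ N (a 2n×2(k+ℓ) matrix) satisfies (M ⋄ N)ᵀJ₂ₙ(M ⋄ N) = J₂₍ₖ₊ₗ₎ if and only if MᵀJ₂ₙN = 0 (the 2k×2ℓ zero matrix). -/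
open Matrix
open scoped Matrix.Norms.L2Operator Classical

/-- The symplectic concatenation `M ⋄ N` of a `2n × 2k` matrix
`M = (p₁, …, p_k, q₁, …, q_k)` and a `2n × 2ℓ` matrix `N = (x₁, …, x_ℓ, y₁, …, y_ℓ)`,
namely `(p₁, …, p_k, x₁, …, x_ℓ, q₁, …, q_k, y₁, …, y_ℓ)`. -/
def sconcat {n k l : ℕ} (M : Matrix (Fin n ⊕ Fin n) (Fin k ⊕ Fin k) ℝ)
    (N : Matrix (Fin n ⊕ Fin n) (Fin l ⊕ Fin l) ℝ) :
    Matrix (Fin n ⊕ Fin n) ((Fin k ⊕ Fin l) ⊕ (Fin k ⊕ Fin l)) ℝ :=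
  Matrix.of fun r c =>
    Sum.elim
      (Sum.elim (fun a => M r (Sum.inl a)) (fun a => N r (Sum.inl a)))
      (Sum.elim (fun a => M r (Sum.inr a)) (fun a => N r (Sum.inr a))) c

/-- **Symplectic concatenation criterion**: for `k + ℓ ≤ n`, `M ∈ Sp(2n, 2k)` and
`N ∈ Sp(2n, 2ℓ)`, the concatenation `M ⋄ N` lies in `Sp(2n, 2(k+ℓ))` if and only if
`MᵀJ₂ₙN = 0`. -/
theorem sconcat_symplectic_iff (n k l : ℕ) (hkl : k + l ≤ n)
    (M : Matrix (Fin n ⊕ Fin n) (Fin k ⊕ Fin k) ℝ)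
    (N : Matrix (Fin n ⊕ Fin n) (Fin l ⊕ Fin l) ℝ)
    (hM : Mᵀ * J' (Fin n) * M = J' (Fin k))
    (hN : Nᵀ * J' (Fin n) * N = J' (Fin l)) :
    (sconcat M N)ᵀ * J' (Fin n) * sconcat M N = J' (Fin k ⊕ Fin l) ↔
      Mᵀ * J' (Fin n) * N = 0 := by
  classical
  set e := Equiv.sumSumSumComm (Fin k) (Fin l) (Fin k) (Fin l) with he
  have hP : sconcat M N = (fromCols M N).submatrix id ⇑e := by
    ext r c
    rcases c with (a | a) | (a | a) <;> rfl
  have hform : (sconcat M N)ᵀ * J' (Fin n) * sconcat M N =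
      (Matrix.fromBlocks (Mᵀ * J' (Fin n) * M) (Mᵀ * J' (Fin n) * N)
        (Nᵀ * J' (Fin n) * M) (Nᵀ * J' (Fin n) * N)).submatrix ⇑e ⇑e := by
    rw [hP]
    rw [Matrix.transpose_submatrix, Matrix.transpose_fromCols]
    rw [show ((fromRows Mᵀ Nᵀ).submatrix ⇑e id) * J' (Fin n) =
      ((fromRows Mᵀ Nᵀ) * J' (Fin n)).submatrix ⇑e id from
        (Matrix.submatrix_mul _ _ _ id _ Function.bijective_id).symm]
    rw [show (((fromRows Mᵀ Nᵀ) * J' (Fin n)).submatrix ⇑e id) *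
        ((fromCols M N).submatrix id ⇑e) =
      (((fromRows Mᵀ Nᵀ) * J' (Fin n)) * (fromCols M N)).submatrix ⇑e ⇑e from
        (Matrix.submatrix_mul _ _ _ id _ Function.bijective_id).symm]
    rw [Matrix.fromRows_mul, Matrix.fromRows_mul_fromCols]
  have hJ : (J' (Fin k ⊕ Fin l)) =
      (Matrix.fromBlocks (J' (Fin k)) 0 0 (J' (Fin l))).submatrix ⇑e ⇑e := by
    ext i j
    rcases i with (a | a) | (a | a) <;> rcases j with (b | b) | (b | b) <;>
      simp [J', e, Matrix.one_apply, Sum.inl.injEq, Sum.inr.injEq]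
  rw [hform, hJ]
  rw [show ∀ X Y : Matrix ((Fin k ⊕ Fin k) ⊕ (Fin l ⊕ Fin l))
        ((Fin k ⊕ Fin k) ⊕ (Fin l ⊕ Fin l)) ℝ,
      (X.submatrix ⇑e ⇑e = Y.submatrix ⇑e ⇑e) ↔ X = Y from fun X Y =>
    (Matrix.reindex e.symm e.symm).injective.eq_iff (a := X) (b := Y)]
  rw [hM, hN, Matrix.fromBlocks_inj]
  constructor
  · rintro ⟨-, h, -, -⟩; exact h
  · intro h
    refine ⟨rfl, h, ?_, rfl⟩
    have hJt : (J' (Fin n))ᵀ = -(J' (Fin n)) := by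
      ext i j
      rcases i with a | a <;> rcases j with b | b <;>
        simp [J', Matrix.one_apply, eq_comm]
    have ht : (Mᵀ * J' (Fin n) * N)ᵀ = 0 := by rw [h]; simp
    rw [Matrix.transpose_mul, Matrix.transpose_mul, Matrix.transpose_transpose, hJt,
      Matrix.neg_mul, Matrix.mul_neg, neg_eq_zero, ← Matrix.mul_assoc] at ht
    exact ht
end

section
/- Norm bound on diagonalizing symplectic matrices: Let B be a 2n×2n real positive definite matrix and let S̃ be a 2n×2n real symplectic matrix such that S̃ᵀBS̃ = D̃ ⊕ D̃ for some n×n diagonal matrix D̃ with positive diagonal entries. Then ‖S̃‖² ≤ 2‖B‖·‖B⁻¹‖, where ‖·‖ is the spectral norm. -/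
open Matrix
open scoped Matrix.Norms.L2Operator Classical

section Aux

variable {m : Type*} [Fintype m] [DecidableEq m]

/-- Cauchy–Schwarz for the dot product on `m → ℝ`. -/
lemma dot_sq_le' (x y : m → ℝ) : (x ⬝ᵥ y) ^ 2 ≤ (x ⬝ᵥ x) * (y ⬝ᵥ y) := by
  have h := real_inner_mul_inner_self_le
    ((EuclideanSpace.equiv m ℝ).symm x) ((EuclideanSpace.equiv m ℝ).symm y)
  simp only [PiLp.inner_apply, RCLike.inner_apply, conj_trivial] at h
  simpa [dotProduct, sq, mul_comm] using h

lemma dot_self_nonneg' (x : m → ℝ) : 0 ≤ x ⬝ᵥ x :=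
  Finset.sum_nonneg fun i _ => mul_self_nonneg (x i)

/-- Cauchy–Schwarz for a positive semidefinite quadratic form. -/
lemma psd_CS {M : Matrix m m ℝ} (hM : M.PosSemidef) (x y : m → ℝ) :
    (x ⬝ᵥ M *ᵥ y) ^ 2 ≤ (x ⬝ᵥ M *ᵥ x) * (y ⬝ᵥ M *ᵥ y) := by
  obtain ⟨A, rfl⟩ := (by open scoped MatrixOrder in exact CStarAlgebra.nonneg_iff_eq_star_mul_self.mp hM.nonneg : ∃ A : Matrix m m ℝ, M = Aᴴ * A)
  have h : ∀ u v : m → ℝ, u ⬝ᵥ (Aᴴ * A) *ᵥ v = (A *ᵥ u) ⬝ᵥ (A *ᵥ v) := by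
    intro u v
    rw [← Matrix.mulVec_mulVec, Matrix.dotProduct_mulVec, Matrix.vecMul_conjTranspose]
    simp
  rw [h, h, h]
  exact dot_sq_le' _ _

lemma quad_le_norm (M : Matrix m m ℝ) (x : m → ℝ) :
    x ⬝ᵥ M *ᵥ x ≤ ‖M‖ * (x ⬝ᵥ x) := by
  have h1 : x ⬝ᵥ M *ᵥ x ≤
      ‖(EuclideanSpace.equiv m ℝ).symm x‖ * ‖(EuclideanSpace.equiv m ℝ).symm (M *ᵥ x)‖ := by
    have := real_inner_le_norm ((EuclideanSpace.equiv m ℝ).symm x)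
      ((EuclideanSpace.equiv m ℝ).symm (M *ᵥ x))
    simpa [PiLp.inner_apply, RCLike.inner_apply, dotProduct, mul_comm] using this
  have h2 : ‖(EuclideanSpace.equiv m ℝ).symm (M *ᵥ x)‖ ≤
      ‖M‖ * ‖(EuclideanSpace.equiv m ℝ).symm x‖ :=
    M.l2_opNorm_mulVec _
  have h3 : ‖(EuclideanSpace.equiv m ℝ).symm x‖ ^ 2 = x ⬝ᵥ x := by
    rw [EuclideanSpace.norm_sq_eq]
    simp [dotProduct, sq]
  nlinarith [norm_nonneg ((EuclideanSpace.equiv m ℝ).symm x), norm_nonneg M,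
    norm_nonneg ((EuclideanSpace.equiv m ℝ).symm (M *ᵥ x))]

/-- For a positive definite `M`, `‖y‖² ≤ ‖M⁻¹‖ * yᵀMy`. -/
lemma dot_self_le_inv_norm_mul_quad {M : Matrix m m ℝ} (hM : M.PosDef) (y : m → ℝ) :
    y ⬝ᵥ y ≤ ‖M⁻¹‖ * (y ⬝ᵥ M *ᵥ y) := by
  have hMdet : IsUnit M.det := (Matrix.isUnit_iff_isUnit_det M).mp hM.isUnit
  have hMul : M *ᵥ (M⁻¹ *ᵥ y) = y := by
    rw [Matrix.mulVec_mulVec, Matrix.mul_nonsing_inv _ hMdet, Matrix.one_mulVec]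
  have hCS := psd_CS hM.posSemidef y (M⁻¹ *ᵥ y)
  rw [hMul] at hCS
  have h4 : (M⁻¹ *ᵥ y) ⬝ᵥ y = y ⬝ᵥ M⁻¹ *ᵥ y := dotProduct_comm _ _
  rw [h4] at hCS
  have h3 : y ⬝ᵥ M⁻¹ *ᵥ y ≤ ‖M⁻¹‖ * (y ⬝ᵥ y) := quad_le_norm M⁻¹ y
  have hq : 0 ≤ y ⬝ᵥ M *ᵥ y := by
    have := hM.posSemidef.dotProduct_mulVec_nonneg y
    simpa using this
  rcases eq_or_lt_of_le (dot_self_nonneg' y) with h0 | h0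
  · rw [← h0]
    exact mul_nonneg (norm_nonneg _) hq
  · nlinarith [mul_le_mul_of_nonneg_left h3 hq, norm_nonneg (M⁻¹)]

/-- entry of `Wᵀ * A * W` as a quadratic form of columns. -/
lemma entry_eq_col_dot (W A : Matrix m m ℝ) (i j : m) :
    (Wᵀ * A * W) i j = (fun p => W p i) ⬝ᵥ (A *ᵥ fun p => W p j) := by
  simp only [Matrix.mul_apply, dotProduct, Matrix.mulVec, Matrix.transpose_apply,
    Finset.sum_mul, Finset.mul_sum]
  rw [Finset.sum_comm]
  exact Finset.sum_congr rfl fun p _ => Finset.sum_congr rfl fun q _ => by ring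

lemma Jt_mul_J (m : Type*) [Fintype m] [DecidableEq m] : (J' m)ᵀ * J' m = 1 := by
  rw [show (1 : Matrix (m ⊕ m) (m ⊕ m) ℝ) = Matrix.fromBlocks 1 0 0 1 from
    (Matrix.fromBlocks_one).symm]
  simp [J', Matrix.fromBlocks_transpose, Matrix.fromBlocks_multiply]

lemma J_mul_J (m : Type*) [Fintype m] [DecidableEq m] : J' m * J' m = -1 := by
  rw [show (-1 : Matrix (m ⊕ m) (m ⊕ m) ℝ) = Matrix.fromBlocks (-1) 0 0 (-1) from by
    simp [← Matrix.fromBlocks_one, Matrix.fromBlocks_neg]]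
  simp [J', Matrix.fromBlocks_multiply]

/-- Key lemma: symplectic eigenvalue lower bound. -/
lemma key_lower {M W : Matrix (m ⊕ m) (m ⊕ m) ℝ} (hM : M.PosDef)
    (hWJ : Wᵀ * J' m * W = J' m) (c : m → ℝ)
    (hWM : Wᵀ * M * W = Matrix.diagonal (Sum.elim c c)) (k : m) :
    1 ≤ ‖M⁻¹‖ * c k := by
  set u : (m ⊕ m) → ℝ := fun p => W p (Sum.inl k) with hu
  set v : (m ⊕ m) → ℝ := fun p => W p (Sum.inr k) with hv
  have huu : u ⬝ᵥ M *ᵥ u = c k := by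
    have h := entry_eq_col_dot W M (Sum.inl k) (Sum.inl k)
    rw [hWM] at h
    simpa using h.symm
  have hvv : v ⬝ᵥ M *ᵥ v = c k := by
    have h := entry_eq_col_dot W M (Sum.inr k) (Sum.inr k)
    rw [hWM] at h
    simpa using h.symm
  have hJ1 : u ⬝ᵥ (J' m) *ᵥ v = 1 := by
    have h := entry_eq_col_dot W (J' m) (Sum.inl k) (Sum.inr k)
    rw [hWJ] at h
    have hval : (J' m) (Sum.inl k) (Sum.inr k) = (1 : ℝ) := by simp [J']
    rw [hval] at h
    exact h.symm
  have hJnorm : ((J' m) *ᵥ v) ⬝ᵥ ((J' m) *ᵥ v) = v ⬝ᵥ v := by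
    have : ((J' m) *ᵥ v) ⬝ᵥ ((J' m) *ᵥ v) = v ⬝ᵥ ((J' m)ᵀ * (J' m)) *ᵥ v := by
      rw [← Matrix.mulVec_mulVec, ← Matrix.vecMul_transpose, ← Matrix.dotProduct_mulVec]
    rw [this, Jt_mul_J, Matrix.one_mulVec]
  have hCS : 1 ≤ (u ⬝ᵥ u) * (v ⬝ᵥ v) := by
    have := dot_sq_le' u ((J' m) *ᵥ v)
    rw [hJ1, hJnorm] at this
    simpa using this
  have ha : u ⬝ᵥ u ≤ ‖M⁻¹‖ * c k := by
    have := dot_self_le_inv_norm_mul_quad hM u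
    rwa [huu] at this
  have hb : v ⬝ᵥ v ≤ ‖M⁻¹‖ * c k := by
    have := dot_self_le_inv_norm_mul_quad hM v
    rwa [hvv] at this
  nlinarith [dot_self_nonneg' u, dot_self_nonneg' v]

lemma norm_equiv_symm_sq {m : Type*} [Fintype m] (x : m → ℝ) :
    ‖(EuclideanSpace.equiv m ℝ).symm x‖ ^ 2 = x ⬝ᵥ x := by
  rw [EuclideanSpace.norm_sq_eq]
  simp [dotProduct, sq]

end Aux

/-- **Norm bound on diagonalizing symplectic matrices**: if `B` is positive definite and the
symplectic matrix `S̃` satisfies `S̃ᵀBS̃ = D̃ ⊕ D̃` with `D̃` diagonal with positive entries, then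
`‖S̃‖² ≤ 2‖B‖·‖B⁻¹‖` in the spectral norm. -/
theorem norm_sq_le_two_mul_condition_number (n : ℕ)
    (B S : Matrix (Fin n ⊕ Fin n) (Fin n ⊕ Fin n) ℝ) (hB : B.PosDef)
    (hS : Sᵀ * J' (Fin n) * S = J' (Fin n))
    (d : Fin n → ℝ) (hdpos : ∀ i, 0 < d i)
    (hSB : Sᵀ * B * S = Matrix.fromBlocks (Matrix.diagonal d) 0 0 (Matrix.diagonal d)) :
    ‖S‖ ^ 2 ≤ 2 * ‖B‖ * ‖B⁻¹‖ := by
  classical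
  have hJJ := J_mul_J (Fin n)
  have hdetJ : (J' (Fin n)).det ≠ 0 := by
    have h := congrArg Matrix.det (Jt_mul_J (Fin n))
    rw [Matrix.det_mul, Matrix.det_transpose, Matrix.det_one] at h
    intro h0
    rw [h0, mul_zero] at h
    exact zero_ne_one h
  have hdetS : IsUnit S.det := by
    have h := congrArg Matrix.det hS
    rw [Matrix.det_mul, Matrix.det_mul, Matrix.det_transpose] at h
    have h2 : (S.det * S.det) * (J' (Fin n)).det = 1 * (J' (Fin n)).det := by
      linear_combination h
    have h3 := mul_right_cancel₀ hdetJ h2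
    exact IsUnit.of_mul_eq_one _ h3
  have hdetSt : IsUnit (Sᵀ).det := by rwa [Matrix.det_transpose]
  set dd : (Fin n ⊕ Fin n) → ℝ := Sum.elim d d with hdd
  have hSB' : Sᵀ * B * S = Matrix.diagonal dd := by rw [hSB, Matrix.fromBlocks_diagonal]
  have hdetB : IsUnit B.det := (Matrix.isUnit_iff_isUnit_det B).mp hB.isUnit
  have hJinv : (J' (Fin n))⁻¹ = -(J' (Fin n)) :=
    Matrix.inv_eq_right_inv (by rw [Matrix.mul_neg, hJJ, neg_neg])
  have e0 : S⁻¹ * ((J' (Fin n))⁻¹ * (Sᵀ)⁻¹) = (J' (Fin n))⁻¹ := by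
    have h : (Sᵀ * J' (Fin n) * S)⁻¹ = (J' (Fin n))⁻¹ := by rw [hS]
    rwa [Matrix.mul_inv_rev, Matrix.mul_inv_rev] at h
  have e0a : (J' (Fin n))⁻¹ * (Sᵀ)⁻¹ = S * (J' (Fin n))⁻¹ := by
    have h := congrArg (fun X => S * X) e0
    simpa [Matrix.mul_nonsing_inv_cancel_left _ _ hdetS] using h
  have e1 : S * (J' (Fin n))⁻¹ * Sᵀ = (J' (Fin n))⁻¹ := by
    have h := congrArg (fun X => X * Sᵀ) e0a
    rw [Matrix.nonsing_inv_mul_cancel_right _ _ hdetSt] at h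
    exact h.symm
  have hS2 : S * J' (Fin n) * Sᵀ = J' (Fin n) := by
    have h := e1
    rw [hJinv] at h
    simp only [Matrix.mul_neg, Matrix.neg_mul] at h
    exact neg_inj.mp h
  have hWJ : ((S⁻¹)ᵀ)ᵀ * J' (Fin n) * (S⁻¹)ᵀ = J' (Fin n) := by
    rw [Matrix.transpose_transpose, Matrix.transpose_nonsing_inv]
    conv_lhs => rw [← hS2]
    simp only [← Matrix.mul_assoc]
    rw [Matrix.nonsing_inv_mul _ hdetS, Matrix.one_mul,
      Matrix.mul_nonsing_inv_cancel_right _ _ hdetSt]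
  have hdiaginv : (Matrix.diagonal dd)⁻¹ =
      Matrix.diagonal (Sum.elim (fun k => (d k)⁻¹) (fun k => (d k)⁻¹)) := by
    apply Matrix.inv_eq_right_inv
    have hfun : (fun i => dd i * (Sum.elim (fun k => (d k)⁻¹) (fun k => (d k)⁻¹)) i) = fun _ => (1:ℝ) := by
      funext i
      rcases i with k | k <;>
        simp [hdd, mul_inv_cancel₀ (hdpos k).ne']
    rw [Matrix.diagonal_mul_diagonal, hfun, Matrix.diagonal_one]
  have hWM : ((S⁻¹)ᵀ)ᵀ * B⁻¹ * (S⁻¹)ᵀ =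
      Matrix.diagonal (Sum.elim (fun k => (d k)⁻¹) (fun k => (d k)⁻¹)) := by
    rw [Matrix.transpose_transpose, Matrix.transpose_nonsing_inv, ← hdiaginv, ← hSB',
      Matrix.mul_inv_rev, Matrix.mul_inv_rev]
    simp only [Matrix.mul_assoc]
  have hBinvinv : (B⁻¹)⁻¹ = B := Matrix.nonsing_inv_nonsing_inv _ hdetB
  have hdle : ∀ k, d k ≤ ‖B‖ := by
    intro k
    have h := key_lower hB.inv hWJ (fun k => (d k)⁻¹) hWM k
    rw [hBinvinv] at h
    have hk := hdpos k
    calc d k = 1 * d k := (one_mul _).symm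
    _ ≤ (‖B‖ * (d k)⁻¹) * d k := mul_le_mul_of_nonneg_right h hk.le
    _ = ‖B‖ := by field_simp
  have hddle : ∀ i, dd i ≤ ‖B‖ := by rintro (k | k) <;> exact hdle k
  have hq : ∀ x : (Fin n ⊕ Fin n) → ℝ,
      (S *ᵥ x) ⬝ᵥ (S *ᵥ x) ≤ (‖B‖ * ‖B⁻¹‖) * (x ⬝ᵥ x) := by
    intro x
    have h1 := dot_self_le_inv_norm_mul_quad hB (S *ᵥ x)
    have h2 : (S *ᵥ x) ⬝ᵥ B *ᵥ (S *ᵥ x) = x ⬝ᵥ (Matrix.diagonal dd) *ᵥ x := by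
      rw [← hSB', ← Matrix.mulVec_mulVec, ← Matrix.mulVec_mulVec,
        Matrix.dotProduct_mulVec x Sᵀ _, Matrix.vecMul_transpose]
    have h3 : x ⬝ᵥ (Matrix.diagonal dd) *ᵥ x ≤ ‖B‖ * (x ⬝ᵥ x) := by
      simp only [dotProduct, Matrix.mulVec_diagonal, Finset.mul_sum]
      apply Finset.sum_le_sum
      intro i _
      have h4 := hddle i
      nlinarith [mul_self_nonneg (x i), norm_nonneg B]
    calc (S *ᵥ x) ⬝ᵥ (S *ᵥ x) ≤ ‖B⁻¹‖ * ((S *ᵥ x) ⬝ᵥ B *ᵥ (S *ᵥ x)) := h1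
    _ = ‖B⁻¹‖ * (x ⬝ᵥ (Matrix.diagonal dd) *ᵥ x) := by rw [h2]
    _ ≤ ‖B⁻¹‖ * (‖B‖ * (x ⬝ᵥ x)) := mul_le_mul_of_nonneg_left h3 (norm_nonneg _)
    _ = (‖B‖ * ‖B⁻¹‖) * (x ⬝ᵥ x) := by ring
  have hq0 : (0:ℝ) ≤ ‖B‖ * ‖B⁻¹‖ := mul_nonneg (norm_nonneg _) (norm_nonneg _)
  have hnorm : ‖S‖ ≤ Real.sqrt (‖B‖ * ‖B⁻¹‖) := by
    rw [Matrix.l2_opNorm_def]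
    apply ContinuousLinearMap.opNorm_le_bound _ (Real.sqrt_nonneg _)
    intro x
    show ‖(EuclideanSpace.equiv (Fin n ⊕ Fin n) ℝ).symm
        (S *ᵥ ((EuclideanSpace.equiv (Fin n ⊕ Fin n) ℝ) x))‖ ≤ _
    set x' : (Fin n ⊕ Fin n) → ℝ := (EuclideanSpace.equiv (Fin n ⊕ Fin n) ℝ) x with hx'
    have hxnorm : ‖x‖ ^ 2 = x' ⬝ᵥ x' := by
      rw [← norm_equiv_symm_sq x']
      congr 1
    have hsq : ‖(EuclideanSpace.equiv (Fin n ⊕ Fin n) ℝ).symm (S *ᵥ x')‖ ^ 2 ≤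
        (‖B‖ * ‖B⁻¹‖) * ‖x‖ ^ 2 := by
      rw [norm_equiv_symm_sq, hxnorm]
      exact hq x'
    have h5 := Real.sqrt_le_sqrt hsq
    rw [Real.sqrt_sq (norm_nonneg _), Real.sqrt_mul hq0, Real.sqrt_sq (norm_nonneg _)] at h5
    exact h5
  have h2 : ‖S‖ ^ 2 ≤ ‖B‖ * ‖B⁻¹‖ := by
    have h := pow_le_pow_left₀ (norm_nonneg S) hnorm 2
    rwa [Real.sq_sqrt hq0] at h
  nlinarith [hq0]
end

section
/- First-order equality of diagonal symplectic sub-blocks (equation (6) of Proposition 1): Let A be a 2n×2n real positive definite matrix with distinct symplectic eigenvalues μ₁ < ⋯ < μ_r and index sets α_i = {j : d_j(A) = μ_i}, β_i = {j + n : j ∈ α_i}. Let S ∈ Sp(2n; A) be fixed. Then there exist constants c > 0 and δ > 0 such that for every 2n×2n real symmetric matrix H with ‖H‖ < δ and A + H positive definite, every S̃ ∈ Sp(2n; A+H), and every i = 1, …, r, one has ‖(S⁻¹S̃)_{α_i α_i} − (S⁻¹S̃)_{β_i β_i}‖ ≤ c‖H‖. -/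
open Matrix
open scoped Matrix.Norms.L2Operator Classical

set_option linter.unusedSectionVars false
set_option linter.unusedVariables false
set_option maxHeartbeats 1000000

namespace DSFOE

variable {m l : Type*} [Fintype m] [DecidableEq m] [Fintype l] [DecidableEq l]

noncomputable def en (x : m → ℝ) : ℝ := Real.sqrt (x ⬝ᵥ x)

lemma dot_self_nonneg (x : m → ℝ) : 0 ≤ x ⬝ᵥ x :=
  Finset.sum_nonneg fun i _ => mul_self_nonneg _

lemma en_nonneg (x : m → ℝ) : 0 ≤ en x := Real.sqrt_nonneg _

lemma en_sq (x : m → ℝ) : en x ^ 2 = x ⬝ᵥ x := Real.sq_sqrt (dot_self_nonneg x)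

lemma en_eq_norm (x : m → ℝ) : en x = ‖(EuclideanSpace.equiv m ℝ).symm x‖ := by
  rw [EuclideanSpace.norm_eq, en]
  congr 1
  simp [dotProduct, Real.norm_eq_abs, sq, abs_mul_abs_self]

lemma en_mulVec_le (M : Matrix l m ℝ) (x : m → ℝ) : en (M *ᵥ x) ≤ ‖M‖ * en x := by
  rw [en_eq_norm, en_eq_norm]
  exact M.l2_opNorm_mulVec ((EuclideanSpace.equiv m ℝ).symm x)

lemma opNorm_le_of_en (M : Matrix l m ℝ) (c : ℝ) (hc : 0 ≤ c)
    (h : ∀ x : m → ℝ, en (M *ᵥ x) ≤ c * en x) : ‖M‖ ≤ c := by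
  rw [Matrix.l2_opNorm_def]
  refine ContinuousLinearMap.opNorm_le_bound _ hc fun x => ?_
  have := h ((EuclideanSpace.equiv m ℝ) x)
  rw [en_eq_norm, en_eq_norm] at this
  simp at this ⊢
  exact this

/-- Cauchy–Schwarz for dotProduct. -/
lemma abs_dot_le (x w : m → ℝ) : |x ⬝ᵥ w| ≤ en x * en w := by
  have h := abs_real_inner_le_norm ((EuclideanSpace.equiv m ℝ).symm x)
    ((EuclideanSpace.equiv m ℝ).symm w)
  rw [← en_eq_norm, ← en_eq_norm] at h
  have he : x ⬝ᵥ w = inner ℝ ((EuclideanSpace.equiv m ℝ).symm x) ((EuclideanSpace.equiv m ℝ).symm w) := by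
    simp [PiLp.inner_apply, RCLike.inner_apply, dotProduct, mul_comm]
  rw [he]; exact h

lemma abs_entry_le_en (v : m → ℝ) (i : m) : |v i| ≤ en v := by
  have h : (v i) ^ 2 ≤ v ⬝ᵥ v := by
    have := Finset.single_le_sum (f := fun j => v j * v j)
      (fun j _ => mul_self_nonneg _) (Finset.mem_univ i)
    simpa [dotProduct, sq] using this
  calc |v i| = Real.sqrt ((v i) ^ 2) := (Real.sqrt_sq_eq_abs _).symm
  _ ≤ Real.sqrt (v ⬝ᵥ v) := Real.sqrt_le_sqrt h

lemma en_single (b : m) : en (Pi.single b (1:ℝ)) = 1 := by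
  simp [en, single_dotProduct]

lemma abs_entry_le_opNorm (M : Matrix l m ℝ) (a : l) (b : m) : |M a b| ≤ ‖M‖ := by
  have h1 : |M a b| ≤ en (M *ᵥ Pi.single b 1) := by
    have := abs_entry_le_en (M *ᵥ Pi.single b 1) a
    simpa using this
  calc |M a b| ≤ en (M *ᵥ Pi.single b 1) := h1
  _ ≤ ‖M‖ * en (Pi.single b 1) := en_mulVec_le _ _
  _ = ‖M‖ := by rw [en_single]; ring

lemma en_stdBasis_mulVec (a : l) (b : m) (x : m → ℝ) :
    en ((Matrix.single a b (1:ℝ)) *ᵥ x) ≤ en x := by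
  have hv : (Matrix.single a b (1:ℝ)) *ᵥ x = Pi.single a (x b) := by
    ext i
    simp [Matrix.mulVec, Matrix.single, dotProduct, Pi.single_apply, ite_and,
      Finset.sum_ite_eq, Finset.sum_ite_eq', eq_comm]
  rw [hv]
  have h1 : Pi.single a (x b) ⬝ᵥ Pi.single a (x b) = x b * x b := by
    simp [single_dotProduct]
  have h2 : x b * x b ≤ x ⬝ᵥ x := by
    have := Finset.single_le_sum (f := fun j => x j * x j)
      (fun j _ => mul_self_nonneg _) (Finset.mem_univ b)
    simpa [dotProduct] using this
  exact Real.sqrt_le_sqrt (by rw [h1]; exact h2)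

lemma opNorm_stdBasis_le (a : l) (b : m) : ‖Matrix.single a b (1:ℝ)‖ ≤ 1 :=
  opNorm_le_of_en _ 1 zero_le_one fun x => by simpa using en_stdBasis_mulVec a b x

lemma opNorm_le_sum_abs (M : Matrix l m ℝ) : ‖M‖ ≤ ∑ a : l, ∑ b : m, |M a b| := by
  conv_lhs => rw [Matrix.matrix_eq_sum_single M]
  refine le_trans (norm_sum_le _ _) (Finset.sum_le_sum fun a _ => ?_)
  refine le_trans (norm_sum_le _ _) (Finset.sum_le_sum fun b _ => ?_)
  have h : Matrix.single a b (M a b) = (M a b) • Matrix.single a b (1:ℝ) := by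
    ext i j; simp [Matrix.single, Pi.smul_apply, mul_ite]
  rw [h, norm_smul]
  have := opNorm_stdBasis_le (l := l) (m := m) a b
  calc ‖M a b‖ * ‖Matrix.single a b (1:ℝ)‖ ≤ ‖M a b‖ * 1 :=
    mul_le_mul_of_nonneg_left this (norm_nonneg _)
  _ = |M a b| := by rw [mul_one, Real.norm_eq_abs]

lemma quad_conj (B : Matrix l l ℝ) (M : Matrix l m ℝ) (x : m → ℝ) :
    (M *ᵥ x) ⬝ᵥ (B *ᵥ (M *ᵥ x)) = x ⬝ᵥ ((Mᵀ * B * M) *ᵥ x) := by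
  rw [← Matrix.mulVec_mulVec, ← Matrix.mulVec_mulVec, Matrix.dotProduct_mulVec x,
    Matrix.vecMul_transpose, Matrix.dotProduct_mulVec (M *ᵥ x)]

lemma dot_mulVec_self (M : Matrix l m ℝ) (x : m → ℝ) :
    (M *ᵥ x) ⬝ᵥ (M *ᵥ x) = x ⬝ᵥ ((Mᵀ * M) *ᵥ x) := by
  have := quad_conj (1 : Matrix l l ℝ) M x
  simpa using this

lemma dot_symm_mulVec (B : Matrix m m ℝ) (hB : Bᵀ = B) (x y : m → ℝ) :
    y ⬝ᵥ (B *ᵥ x) = x ⬝ᵥ (B *ᵥ y) := by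
  rw [Matrix.dotProduct_mulVec y, ← Matrix.mulVec_transpose, hB, dotProduct_comm]

/-- Cauchy–Schwarz for a positive semidefinite symmetric real quadratic form. -/
lemma cs_quad (B : Matrix m m ℝ) (hB : Bᵀ = B)
    (hnn : ∀ z : m → ℝ, 0 ≤ z ⬝ᵥ (B *ᵥ z)) (x y : m → ℝ) :
    (x ⬝ᵥ (B *ᵥ y)) ^ 2 ≤ (x ⬝ᵥ (B *ᵥ x)) * (y ⬝ᵥ (B *ᵥ y)) := by
  have key : ∀ t : ℝ, 0 ≤ (y ⬝ᵥ (B *ᵥ y)) * (t * t) + (2 * (x ⬝ᵥ (B *ᵥ y))) * t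
      + (x ⬝ᵥ (B *ᵥ x)) := by
    intro t
    have h := hnn (x + t • y)
    have expand : (x + t • y) ⬝ᵥ (B *ᵥ (x + t • y)) =
        (y ⬝ᵥ (B *ᵥ y)) * (t * t) + (2 * (x ⬝ᵥ (B *ᵥ y))) * t + (x ⬝ᵥ (B *ᵥ x)) := by
      rw [Matrix.mulVec_add, Matrix.mulVec_smul, add_dotProduct,
        smul_dotProduct, dotProduct_add, dotProduct_add,
        dotProduct_smul, dotProduct_smul,
        dot_symm_mulVec B hB x y]
      simp only [smul_eq_mul]
      ring
    rw [expand] at h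
    exact h
  have hd : discrim (y ⬝ᵥ (B *ᵥ y)) (2 * (x ⬝ᵥ (B *ᵥ y))) (x ⬝ᵥ (B *ᵥ x)) ≤ 0 :=
    discrim_le_zero key
  rw [discrim] at hd
  nlinarith [hd]

/-- Quadratic form upper bound by operator norm. -/
lemma quad_le_opNorm (B : Matrix m m ℝ) (x : m → ℝ) :
    x ⬝ᵥ (B *ᵥ x) ≤ ‖B‖ * (x ⬝ᵥ x) := by
  have h1 : x ⬝ᵥ (B *ᵥ x) ≤ |x ⬝ᵥ (B *ᵥ x)| := le_abs_self _
  have h2 := abs_dot_le x (B *ᵥ x)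
  have h3 := en_mulVec_le B x
  have h4 := en_nonneg x
  have h5 : en x * en (B *ᵥ x) ≤ en x * (‖B‖ * en x) :=
    mul_le_mul_of_nonneg_left h3 h4
  calc x ⬝ᵥ (B *ᵥ x) ≤ en x * en (B *ᵥ x) := le_trans h1 h2
  _ ≤ en x * (‖B‖ * en x) := h5
  _ = ‖B‖ * (x ⬝ᵥ x) := by rw [← en_sq]; ring

lemma abs_quad_le_opNorm (B : Matrix m m ℝ) (x : m → ℝ) :
    |x ⬝ᵥ (B *ᵥ x)| ≤ ‖B‖ * (x ⬝ᵥ x) := by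
  have h2 := abs_dot_le x (B *ᵥ x)
  have h3 := en_mulVec_le B x
  have h4 := en_nonneg x
  have h5 : en x * en (B *ᵥ x) ≤ en x * (‖B‖ * en x) :=
    mul_le_mul_of_nonneg_left h3 h4
  calc |x ⬝ᵥ (B *ᵥ x)| ≤ en x * en (B *ᵥ x) := h2
  _ ≤ en x * (‖B‖ * en x) := h5
  _ = ‖B‖ * (x ⬝ᵥ x) := by rw [← en_sq]; ring

/-- `‖x‖² ≤ ‖B⁻¹‖ · xᵀBx` for a symmetric positive definite `B`. -/
lemma dot_le_inv_norm_mul_quad (B : Matrix m m ℝ) (hB : B.PosDef) (hBs : Bᵀ = B)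
    (x : m → ℝ) : x ⬝ᵥ x ≤ ‖B⁻¹‖ * (x ⬝ᵥ (B *ᵥ x)) := by
  have hU : IsUnit B := hB.isUnit
  have hnn : ∀ z : m → ℝ, 0 ≤ z ⬝ᵥ (B *ᵥ z) := by
    intro z
    have := hB.posSemidef.dotProduct_mulVec_nonneg z
    simpa using this
  have hdet : IsUnit B.det := (Matrix.isUnit_iff_isUnit_det B).mp hU
  have hxx : x ⬝ᵥ (B *ᵥ (B⁻¹ *ᵥ x)) = x ⬝ᵥ x := by
    rw [Matrix.mulVec_mulVec, Matrix.mul_nonsing_inv B hdet, Matrix.one_mulVec]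
  have hyy : (B⁻¹ *ᵥ x) ⬝ᵥ (B *ᵥ (B⁻¹ *ᵥ x)) = x ⬝ᵥ (B⁻¹ *ᵥ x) := by
    rw [Matrix.mulVec_mulVec, Matrix.mul_nonsing_inv B hdet, Matrix.one_mulVec,
      dotProduct_comm]
  have hcs := cs_quad B hBs hnn x (B⁻¹ *ᵥ x)
  rw [hxx, hyy] at hcs
  have hb : x ⬝ᵥ (B⁻¹ *ᵥ x) ≤ ‖B⁻¹‖ * (x ⬝ᵥ x) := quad_le_opNorm B⁻¹ x
  have hq : 0 ≤ x ⬝ᵥ (B *ᵥ x) := hnn x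
  rcases eq_or_lt_of_le (dot_self_nonneg x) with h0 | h0
  · rw [← h0]
    positivity
  · have h2 : (x ⬝ᵥ x) ^ 2 ≤ (x ⬝ᵥ (B *ᵥ x)) * (‖B⁻¹‖ * (x ⬝ᵥ x)) := by
      nlinarith [hcs, hb, hq]
    nlinarith [h2, h0]

section Symplectic

lemma J'_transpose : (J' m)ᵀ = Matrix.fromBlocks 0 (-1) 1 0 := by
  simp [J', Matrix.fromBlocks_transpose]

lemma J'_mul_Jt : J' m * (J' m)ᵀ = 1 := by
  rw [J'_transpose]
  simp [J', Matrix.fromBlocks_multiply, Matrix.fromBlocks_one]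

lemma Jt_mul_J' : (J' m)ᵀ * J' m = 1 := by
  rw [J'_transpose]
  simp [J', Matrix.fromBlocks_multiply, Matrix.fromBlocks_one]

lemma symp_det {W : Matrix (m ⊕ m) (m ⊕ m) ℝ} (hW : Wᵀ * J' m * W = J' m) :
    IsUnit W.det := by
  have hJ : IsUnit (J' m).det := by
    apply IsUnit.of_mul_eq_one ((J' m)ᵀ).det
    rw [← Matrix.det_mul, J'_mul_Jt, Matrix.det_one]
  have h := congrArg Matrix.det hW
  rw [Matrix.det_mul, Matrix.det_mul, Matrix.det_transpose] at h
  have h2 : W.det * W.det = 1 := by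
    have hj : (J' m).det ≠ 0 := hJ.ne_zero
    apply mul_left_cancel₀ hj
    rw [mul_one]
    linear_combination h
  exact IsUnit.of_mul_eq_one _ h2

lemma symp_inv {W : Matrix (m ⊕ m) (m ⊕ m) ℝ} (hW : Wᵀ * J' m * W = J' m) :
    W⁻¹ = (J' m)ᵀ * Wᵀ * J' m := by
  apply Matrix.inv_eq_left_inv
  calc (J' m)ᵀ * Wᵀ * J' m * W = (J' m)ᵀ * (Wᵀ * J' m * W) := by
        simp only [Matrix.mul_assoc]
  _ = (J' m)ᵀ * J' m := by rw [hW]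
  _ = 1 := Jt_mul_J'

lemma symp_JtWt {W : Matrix (m ⊕ m) (m ⊕ m) ℝ} (hW : Wᵀ * J' m * W = J' m) :
    W * (J' m)ᵀ * Wᵀ = (J' m)ᵀ := by
  have hdet := symp_det hW
  have h1 : W * W⁻¹ = 1 := Matrix.mul_nonsing_inv W hdet
  rw [symp_inv hW] at h1
  -- W * (Jᵀ * Wᵀ * J) = 1
  have h2 : W * ((J' m)ᵀ * Wᵀ * J' m) * (J' m)ᵀ = (J' m)ᵀ := by
    rw [← Matrix.mul_assoc] at h1 ⊢
    rw [h1, Matrix.one_mul]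
  calc W * (J' m)ᵀ * Wᵀ = W * ((J' m)ᵀ * Wᵀ * J' m) * (J' m)ᵀ := by
        simp only [Matrix.mul_assoc]
        rw [show J' m * (J' m)ᵀ = 1 from J'_mul_Jt, Matrix.mul_one]
  _ = (J' m)ᵀ := h2

lemma symp_invT {W : Matrix (m ⊕ m) (m ⊕ m) ℝ} (hW : Wᵀ * J' m * W = J' m) :
    (W⁻¹)ᵀ = (J' m)ᵀ * W * J' m := by
  rw [symp_inv hW]
  rw [Matrix.transpose_mul, Matrix.transpose_mul, Matrix.transpose_transpose,
    Matrix.transpose_transpose]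
  rw [Matrix.mul_assoc]

lemma opNorm_Jt_le : ‖(J' m)ᵀ‖ ≤ 1 := by
  apply opNorm_le_of_en _ 1 zero_le_one
  intro x
  have h : ((J' m)ᵀ *ᵥ x) ⬝ᵥ ((J' m)ᵀ *ᵥ x) = x ⬝ᵥ x := by
    rw [dot_mulVec_self, Matrix.transpose_transpose, J'_mul_Jt, Matrix.one_mulVec]
  rw [en, en, h, one_mul]

lemma en_Jt_mulVec (x : (m ⊕ m) → ℝ) : en ((J' m)ᵀ *ᵥ x) = en x := by
  have h : ((J' m)ᵀ *ᵥ x) ⬝ᵥ ((J' m)ᵀ *ᵥ x) = x ⬝ᵥ x := by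
    rw [dot_mulVec_self, Matrix.transpose_transpose, J'_mul_Jt, Matrix.one_mulVec]
  rw [en, en, h]

end Symplectic

end DSFOE

open DSFOE

/-- Equation (6) of Proposition 1: `(S⁻¹S̃)_{αᵢαᵢ} = (S⁻¹S̃)_{βᵢβᵢ} + O(‖H‖)`, where
`αᵢ = {a : d a = μ i}` lives in the first copy of `Fin n` and `βᵢ` is the same set in the
second copy. -/
theorem diag_subblocks_first_order_eq (n r : ℕ)
    (A : Matrix (Fin n ⊕ Fin n) (Fin n ⊕ Fin n) ℝ) (hA : A.PosDef)
    (d : Fin n → ℝ) (μ : Fin r → ℝ)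
    (hd : Monotone d) (hdpos : ∀ j, 0 < d j) (hμ : StrictMono μ)
    (hdμ : ∀ j, ∃ i, d j = μ i) (hμd : ∀ i, ∃ j, d j = μ i)
    (S : Matrix (Fin n ⊕ Fin n) (Fin n ⊕ Fin n) ℝ)
    (hS : Sᵀ * J' (Fin n) * S = J' (Fin n))
    (hSA : Sᵀ * A * S = Matrix.fromBlocks (Matrix.diagonal d) 0 0 (Matrix.diagonal d)) :
    ∃ c > 0, ∃ δ > 0,
      ∀ H : Matrix (Fin n ⊕ Fin n) (Fin n ⊕ Fin n) ℝ, H.IsSymm → ‖H‖ < δ → (A + H).PosDef →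
      ∀ S' : Matrix (Fin n ⊕ Fin n) (Fin n ⊕ Fin n) ℝ,
        S'ᵀ * J' (Fin n) * S' = J' (Fin n) →
        (∃ e : Fin n → ℝ, Monotone e ∧ (∀ j, 0 < e j) ∧
          S'ᵀ * (A + H) * S' = Matrix.fromBlocks (Matrix.diagonal e) 0 0 (Matrix.diagonal e)) →
        ∀ i : Fin r,
          ‖(S⁻¹ * S').submatrix
              (fun a : {a : Fin n // d a = μ i} => (Sum.inl a.val : Fin n ⊕ Fin n))
              (fun a : {a : Fin n // d a = μ i} => (Sum.inl a.val : Fin n ⊕ Fin n)) -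
            (S⁻¹ * S').submatrix
              (fun a : {a : Fin n // d a = μ i} => (Sum.inr a.val : Fin n ⊕ Fin n))
              (fun a : {a : Fin n // d a = μ i} => (Sum.inr a.val : Fin n ⊕ Fin n))‖
            ≤ c * ‖H‖ := by
  classical
  rcases Nat.eq_zero_or_pos n with hn | hn
  · refine ⟨1, one_pos, 1, one_pos, ?_⟩
    intro H _ _ _ S' _ _ i
    obtain ⟨j, -⟩ := hμd i
    exact (Fin.cast hn j).elim0
  -- main case : 0 < n
  have hSdet : IsUnit S.det := symp_det hS
  have hAs : Aᵀ = A := by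
    have := hA.1
    rwa [Matrix.IsHermitian, Matrix.conjTranspose_eq_transpose_of_trivial] at this
  set Jm := J' (Fin n) with hJm
  set nA := ‖A⁻¹‖ with hnAdef
  have hone : (1 : Matrix (Fin n ⊕ Fin n) (Fin n ⊕ Fin n) ℝ) ≠ 0 := by
    intro h01
    have h := congrFun (congrFun h01 (Sum.inl ⟨0, hn⟩)) (Sum.inl ⟨0, hn⟩)
    simp [Matrix.one_apply] at h
  have hAdet : IsUnit A.det := (Matrix.isUnit_iff_isUnit_det A).mp hA.isUnit
  have hAinv_ne : A⁻¹ ≠ 0 := by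
    intro h0
    have h := Matrix.nonsing_inv_mul A hAdet
    rw [h0, Matrix.zero_mul] at h
    exact hone h.symm
  have hnApos : 0 < nA := by rw [hnAdef]; exact norm_pos_iff.mpr hAinv_ne
  have hAlow : ∀ x, x ⬝ᵥ x ≤ nA * (x ⬝ᵥ (A *ᵥ x)) :=
    fun x => dot_le_inv_norm_mul_quad A hA hAs x
  set Z := (‖A‖ + 1) * (2 * nA) with hZdef
  have hZpos : 0 < Z := by
    rw [hZdef]
    have h1 : (0:ℝ) < ‖A‖ + 1 := by positivity
    nlinarith [hnApos, h1]
  set K := Real.sqrt (Real.sqrt Z) with hKdef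
  have hKnn : 0 ≤ K := Real.sqrt_nonneg _
  set dmin := d ⟨0, hn⟩ with hdmindef
  have hdminpos : 0 < dmin := hdpos _
  set c := (n * n : ℝ) * (2 * (‖S⁻¹‖ + 1) * (K + 1) / dmin) + 1 with hcdef
  have hdminnn : (0:ℝ) ≤ dmin := hdminpos.le
  have hcoef0 : (0:ℝ) ≤ (n * n : ℝ) * (2 * (‖S⁻¹‖ + 1) * (K + 1) / dmin) := by
    apply mul_nonneg (by positivity)
    exact div_nonneg (by positivity) hdminnn
  have hcpos : 0 < c := by rw [hcdef]; linarith [hcoef0]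
  refine ⟨c, hcpos, min 1 (1 / (2 * nA)), lt_min one_pos (div_pos one_pos (by linarith)), ?_⟩
  intro H hHs hHn hBpd S' hS'symp hex i
  obtain ⟨e, hemono, hepos, hSB⟩ := hex
  set B := A + H with hBdef
  have hHnn : (0:ℝ) ≤ ‖H‖ := norm_nonneg _
  have hHle1 : ‖H‖ ≤ 1 := le_of_lt (lt_of_lt_of_le hHn (min_le_left _ _))
  have hHle2 : ‖H‖ ≤ 1 / (2 * nA) := le_of_lt (lt_of_lt_of_le hHn (min_le_right _ _))
  have hBs : Bᵀ = B := by rw [hBdef, Matrix.transpose_add, hAs, hHs.eq]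
  have hBdetU : IsUnit B.det := (Matrix.isUnit_iff_isUnit_det B).mp hBpd.isUnit
  have hS'det : IsUnit S'.det := symp_det hS'symp
  -- cancellation facts
  have hSmi : S * S⁻¹ = 1 := Matrix.mul_nonsing_inv S hSdet
  have hSim : S⁻¹ * S = 1 := Matrix.nonsing_inv_mul S hSdet
  have hS'mi : S' * S'⁻¹ = 1 := Matrix.mul_nonsing_inv S' hS'det
  have hS'im : S'⁻¹ * S' = 1 := Matrix.nonsing_inv_mul S' hS'det
  have hBmi : B * B⁻¹ = 1 := Matrix.mul_nonsing_inv B hBdetU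
  have hSTt : (S⁻¹)ᵀ * Sᵀ = 1 := by
    rw [← Matrix.transpose_mul, hSmi, Matrix.transpose_one]
  set Dh := Matrix.fromBlocks (Matrix.diagonal d) 0 0 (Matrix.diagonal d) with hDhdef
  set De := Matrix.fromBlocks (Matrix.diagonal e) 0 0 (Matrix.diagonal e) with hDedef
  set T := S⁻¹ * S' with hTdef
  -- sandwich: (S⁻¹)ᵀ * Dh * S⁻¹ = A
  have hAeq : (S⁻¹)ᵀ * Dh * S⁻¹ = A := by
    rw [← hSA]
    calc (S⁻¹)ᵀ * (Sᵀ * A * S) * S⁻¹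
        = ((S⁻¹)ᵀ * Sᵀ) * (A * (S * S⁻¹)) := by simp only [Matrix.mul_assoc]
      _ = A := by rw [hSTt, hSmi, Matrix.mul_one, Matrix.one_mul]
  have hJmeq : (S⁻¹)ᵀ * Jm * S⁻¹ = Jm := by
    conv_lhs => rw [← hS]
    calc (S⁻¹)ᵀ * (Sᵀ * Jm * S) * S⁻¹
        = ((S⁻¹)ᵀ * Sᵀ) * (Jm * (S * S⁻¹)) := by simp only [Matrix.mul_assoc]
      _ = Jm := by rw [hSTt, hSmi, Matrix.mul_one, Matrix.one_mul]
  have hTsymp : Tᵀ * Jm * T = Jm := by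
    rw [hTdef, Matrix.transpose_mul]
    calc S'ᵀ * (S⁻¹)ᵀ * Jm * (S⁻¹ * S')
        = S'ᵀ * ((S⁻¹)ᵀ * Jm * S⁻¹) * S' := by simp only [Matrix.mul_assoc]
      _ = S'ᵀ * Jm * S' := by rw [hJmeq]
      _ = Jm := hS'symp
  have hTdet : IsUnit T.det := symp_det hTsymp
  have hTmi : T * T⁻¹ = 1 := Matrix.mul_nonsing_inv T hTdet
  have hTim : T⁻¹ * T = 1 := Matrix.nonsing_inv_mul T hTdet
  set E := S'ᵀ * H * S' with hEdef
  have hTD : Tᵀ * Dh * T = De - E := by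
    rw [hTdef, Matrix.transpose_mul]
    have h1 : S'ᵀ * ((S⁻¹)ᵀ * Dh * S⁻¹) * S' = S'ᵀ * A * S' := by rw [hAeq]
    calc S'ᵀ * (S⁻¹)ᵀ * Dh * (S⁻¹ * S')
        = S'ᵀ * ((S⁻¹)ᵀ * Dh * S⁻¹) * S' := by simp only [Matrix.mul_assoc]
      _ = S'ᵀ * A * S' := h1
      _ = S'ᵀ * B * S' - S'ᵀ * H * S' := by
          rw [hBdef, Matrix.mul_add, Matrix.add_mul]
          abel
      _ = De - E := by rw [hSB, hEdef]
  -- key identity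
  have eq2 : Jm * T⁻¹ * Jmᵀ = Tᵀ := by
    rw [symp_inv hTsymp]
    calc Jm * (Jmᵀ * Tᵀ * Jm) * Jmᵀ
        = (Jm * Jmᵀ) * (Tᵀ * (Jm * Jmᵀ)) := by simp only [Matrix.mul_assoc]
      _ = Tᵀ := by rw [J'_mul_Jt, Matrix.mul_one, Matrix.one_mul]
  have eq4 : Jmᵀ * Dh * T = T * (Jmᵀ * (De - E)) := by
    have h1 : Jm * T⁻¹ * Jmᵀ * Dh * T = De - E := by rw [eq2]; exact hTD
    have h2 : Jmᵀ * (Jm * T⁻¹ * Jmᵀ * Dh * T) = Jmᵀ * (De - E) := by rw [h1]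
    have h3 : T⁻¹ * (Jmᵀ * Dh * T) = Jmᵀ * (De - E) := by
      calc T⁻¹ * (Jmᵀ * Dh * T)
          = (Jmᵀ * Jm) * T⁻¹ * (Jmᵀ * Dh * T) := by rw [Jt_mul_J', Matrix.one_mul]
        _ = Jmᵀ * (Jm * T⁻¹ * Jmᵀ * Dh * T) := by simp only [Matrix.mul_assoc]
        _ = Jmᵀ * (De - E) := h2
    calc Jmᵀ * Dh * T = (T * T⁻¹) * (Jmᵀ * Dh * T) := by rw [hTmi, Matrix.one_mul]
      _ = T * (T⁻¹ * (Jmᵀ * Dh * T)) := by simp only [Matrix.mul_assoc]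
      _ = T * (Jmᵀ * (De - E)) := by rw [h3]
  set R := S⁻¹ * (Jmᵀ * (H * S')) with hRdef
  have eq5 : T * (Jmᵀ * E) = R := by
    have hJW : S' * Jmᵀ * S'ᵀ = Jmᵀ := symp_JtWt hS'symp
    calc T * (Jmᵀ * E)
        = S⁻¹ * ((S' * Jmᵀ * S'ᵀ) * (H * S')) := by
          rw [hTdef, hEdef]; simp only [Matrix.mul_assoc]
      _ = R := by rw [hJW, hRdef]
  have hCfinal : Jmᵀ * Dh * T - T * (Jmᵀ * De) = -R := by
    rw [eq4, ← eq5]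
    rw [Matrix.mul_sub, Matrix.mul_sub]
    abel
  -- norm bounds on B and B⁻¹
  have hBn : ‖B‖ ≤ ‖A‖ + 1 := le_trans (norm_add_le A H) (by linarith)
  have hquadBlow : ∀ x, x ⬝ᵥ x ≤ ‖B⁻¹‖ * (x ⬝ᵥ (B *ᵥ x)) :=
    fun x => dot_le_inv_norm_mul_quad B hBpd hBs x
  have hBinvPD : (B⁻¹).PosDef := hBpd.inv
  have hBinvs : (B⁻¹)ᵀ = B⁻¹ := by rw [Matrix.transpose_nonsing_inv, hBs]
  have hBinvinv : B⁻¹⁻¹ = B := Matrix.nonsing_inv_nonsing_inv B hBdetU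
  have hquadBinvlow : ∀ x, x ⬝ᵥ x ≤ ‖B‖ * (x ⬝ᵥ (B⁻¹ *ᵥ x)) := by
    intro x
    have h := dot_le_inv_norm_mul_quad B⁻¹ hBinvPD hBinvs x
    rwa [hBinvinv] at h
  have hBqlow : ∀ y : (Fin n ⊕ Fin n) → ℝ, (1/(2*nA)) * (y ⬝ᵥ y) ≤ y ⬝ᵥ (B *ᵥ y) := by
    intro y
    have h1 : y ⬝ᵥ (B *ᵥ y) = y ⬝ᵥ (A *ᵥ y) + y ⬝ᵥ (H *ᵥ y) := by
      rw [hBdef, Matrix.add_mulVec, dotProduct_add]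
    have h2 : (1/nA) * (y ⬝ᵥ y) ≤ y ⬝ᵥ (A *ᵥ y) := by
      rw [div_mul_eq_mul_div, one_mul, div_le_iff₀ hnApos]
      nlinarith [hAlow y]
    have h3 : |y ⬝ᵥ (H *ᵥ y)| ≤ ‖H‖ * (y ⬝ᵥ y) := abs_quad_le_opNorm H y
    have h4 : -(‖H‖ * (y ⬝ᵥ y)) ≤ y ⬝ᵥ (H *ᵥ y) := neg_le_of_abs_le h3
    have h5 : ‖H‖ * (y ⬝ᵥ y) ≤ (1/(2*nA)) * (y ⬝ᵥ y) :=
      mul_le_mul_of_nonneg_right hHle2 (dot_self_nonneg y)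
    have h6 : (1/nA) * (y ⬝ᵥ y) = (1/(2*nA)) * (y ⬝ᵥ y) + (1/(2*nA)) * (y ⬝ᵥ y) := by
      field_simp
      ring
    rw [h1]
    linarith [h2, h4, h5, h6]
  have hBinvn : ‖B⁻¹‖ ≤ 2*nA := by
    apply opNorm_le_of_en _ _ (by linarith)
    intro x
    have hBy : B *ᵥ (B⁻¹ *ᵥ x) = x := by
      rw [Matrix.mulVec_mulVec, hBmi, Matrix.one_mulVec]
    have h1 : (1/(2*nA)) * ((B⁻¹ *ᵥ x) ⬝ᵥ (B⁻¹ *ᵥ x)) ≤ (B⁻¹ *ᵥ x) ⬝ᵥ x := by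
      have := hBqlow (B⁻¹ *ᵥ x)
      rwa [hBy] at this
    have h2 : (B⁻¹ *ᵥ x) ⬝ᵥ x ≤ en (B⁻¹ *ᵥ x) * en x :=
      le_trans (le_abs_self _) (abs_dot_le _ x)
    have h3 : (en (B⁻¹ *ᵥ x))^2 = (B⁻¹ *ᵥ x) ⬝ᵥ (B⁻¹ *ᵥ x) := en_sq _
    have h4 : 0 ≤ en (B⁻¹ *ᵥ x) := en_nonneg _
    have h5 : 0 ≤ en x := en_nonneg x
    rcases eq_or_lt_of_le h4 with h0 | h0
    · rw [← h0]; exact mul_nonneg (by linarith) (en_nonneg x)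
    · have h6 : (1/(2*nA)) * en (B⁻¹ *ᵥ x) * en (B⁻¹ *ᵥ x) ≤ en x * en (B⁻¹ *ᵥ x) := by
        nlinarith [h1, h2, h3]
      have h7 : (1/(2*nA)) * en (B⁻¹ *ᵥ x) ≤ en x := le_of_mul_le_mul_right h6 h0
      rw [div_mul_eq_mul_div, one_mul, div_le_iff₀ (by linarith : (0:ℝ) < 2*nA)] at h7
      nlinarith [h7]
  -- columns of S'
  set u : (Fin n ⊕ Fin n) → ((Fin n ⊕ Fin n) → ℝ) := fun b => S' *ᵥ Pi.single b 1 with hudef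
  set ee : (Fin n ⊕ Fin n) → ℝ := Sum.elim e e with heedef
  have heepos : ∀ b, 0 < ee b := by
    intro b; rcases b with k | k <;> simpa [heedef] using hepos k
  have hDebb : ∀ b, De b b = ee b := by
    intro b; rcases b with k | k <;> simp [hDedef, heedef]
  have claim1 : ∀ b, (u b) ⬝ᵥ (B *ᵥ (u b)) = ee b := by
    intro b
    rw [hudef]
    show (S' *ᵥ Pi.single b 1) ⬝ᵥ (B *ᵥ (S' *ᵥ Pi.single b 1)) = ee b
    rw [quad_conj B S' (Pi.single b 1), hSB, Matrix.mulVec_single_one, single_dotProduct,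
      one_mul, Matrix.col_apply, hDebb b]
  have claim3 : ∀ b, (u b) ⬝ᵥ (u b) ≤ ‖B⁻¹‖ * ee b := by
    intro b
    have := hquadBlow (u b)
    rwa [claim1 b] at this
  set Deinv := Matrix.fromBlocks (Matrix.diagonal fun j => (e j)⁻¹) 0 0
    (Matrix.diagonal fun j => (e j)⁻¹) with hDeinvdef
  have hdd : (Matrix.diagonal e) * (Matrix.diagonal fun j => (e j)⁻¹) = 1 := by
    rw [Matrix.diagonal_mul_diagonal]
    rw [show (fun j => e j * (e j)⁻¹) = fun _ => (1:ℝ) from funext fun j =>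
      mul_inv_cancel₀ (hepos j).ne']
    exact Matrix.diagonal_one
  have hDeDeinv : De * Deinv = 1 := by
    rw [hDedef, hDeinvdef, Matrix.fromBlocks_multiply]
    simp [hdd, Matrix.fromBlocks_one]
  have hDeinveq : S'⁻¹ * B⁻¹ * (S'⁻¹)ᵀ = Deinv := by
    calc S'⁻¹ * B⁻¹ * (S'⁻¹)ᵀ = S'⁻¹ * (B⁻¹ * (S'ᵀ)⁻¹) := by
          rw [Matrix.transpose_nonsing_inv, Matrix.mul_assoc]
      _ = (S'ᵀ * B * S')⁻¹ := by rw [Matrix.mul_inv_rev (S'ᵀ * B) S', Matrix.mul_inv_rev]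
      _ = De⁻¹ := by rw [hSB]
      _ = Deinv := Matrix.inv_eq_right_inv hDeDeinv
  have hDeinvbb : ∀ b, Deinv b b = (ee b)⁻¹ := by
    intro b; rcases b with k | k <;> simp [hDeinvdef, heedef]
  have hJsingle1 : ∀ k : Fin n, Jm *ᵥ Pi.single (Sum.inl k) 1 = -Pi.single (Sum.inr k) (1:ℝ) := by
    intro k
    ext a
    rcases a with a | a <;>
      simp [hJm, J', Matrix.mulVec_single, Matrix.one_apply, Pi.single_apply, eq_comm]
  have hJsingle2 : ∀ k : Fin n, Jm *ᵥ Pi.single (Sum.inr k) 1 = Pi.single (Sum.inl k) (1:ℝ) := by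
    intro k
    ext a
    rcases a with a | a <;>
      simp [hJm, J', Matrix.mulVec_single, Matrix.one_apply, Pi.single_apply, eq_comm]
  have hS'invT : (S'⁻¹)ᵀ = Jmᵀ * S' * Jm := symp_invT hS'symp
  have hvq : ∀ b, ((S'⁻¹)ᵀ *ᵥ Pi.single b 1) ⬝ᵥ (B⁻¹ *ᵥ ((S'⁻¹)ᵀ *ᵥ Pi.single b 1))
      = (ee b)⁻¹ := by
    intro b
    rw [quad_conj B⁻¹ ((S'⁻¹)ᵀ) (Pi.single b 1), Matrix.transpose_transpose, hDeinveq,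
      Matrix.mulVec_single_one, single_dotProduct, one_mul, Matrix.col_apply, hDeinvbb b]
  have hvlow : ∀ b, ((S'⁻¹)ᵀ *ᵥ Pi.single b 1) ⬝ᵥ ((S'⁻¹)ᵀ *ᵥ Pi.single b 1)
      ≤ ‖B‖ * (ee b)⁻¹ := by
    intro b
    have := hquadBinvlow ((S'⁻¹)ᵀ *ᵥ Pi.single b 1)
    rwa [hvq b] at this
  have hJtd : ∀ w : (Fin n ⊕ Fin n) → ℝ, (Jmᵀ *ᵥ w) ⬝ᵥ (Jmᵀ *ᵥ w) = w ⬝ᵥ w := by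
    intro w
    rw [dot_mulVec_self, Matrix.transpose_transpose, hJm, J'_mul_Jt, Matrix.one_mulVec]
  have claim2 : ∀ b, (u b) ⬝ᵥ (u b) ≤ ‖B‖ * (ee b)⁻¹ := by
    intro b
    rcases b with k | k
    · have hv := hvlow (Sum.inr k)
      have hv1 : (S'⁻¹)ᵀ *ᵥ Pi.single (Sum.inr k) 1 = Jmᵀ *ᵥ (u (Sum.inl k)) := by
        rw [hS'invT, ← Matrix.mulVec_mulVec, ← Matrix.mulVec_mulVec, hJsingle2 k]
      rw [hv1, hJtd] at hv
      simpa [heedef] using hv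
    · have hv := hvlow (Sum.inl k)
      have hv1 : (S'⁻¹)ᵀ *ᵥ Pi.single (Sum.inl k) 1 = Jmᵀ *ᵥ (-(u (Sum.inr k))) := by
        rw [hS'invT, ← Matrix.mulVec_mulVec, ← Matrix.mulVec_mulVec, hJsingle1 k,
          Matrix.mulVec_neg]
      rw [hv1, hJtd] at hv
      rw [neg_dotProduct, dotProduct_neg, neg_neg] at hv
      simpa [heedef] using hv
  have hcol : ∀ b, en (u b) ≤ K := by
    intro b
    have h1 := claim3 b
    have h2 := claim2 b
    have h3 : 0 ≤ (u b) ⬝ᵥ (u b) := dot_self_nonneg _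
    have h4 : 0 < ee b := heepos b
    have hBinvnn : (0:ℝ) ≤ ‖B⁻¹‖ := norm_nonneg _
    have hBnn : (0:ℝ) ≤ ‖B‖ := norm_nonneg _
    have h5 : ((u b) ⬝ᵥ (u b))^2 ≤ ‖B‖ * ‖B⁻¹‖ := by
      have hm := mul_le_mul h1 h2 h3 (mul_nonneg (norm_nonneg _) h4.le)
      calc ((u b) ⬝ᵥ (u b))^2 = ((u b) ⬝ᵥ (u b)) * ((u b) ⬝ᵥ (u b)) := sq ((u b) ⬝ᵥ (u b))
        _ ≤ (‖B⁻¹‖ * ee b) * (‖B‖ * (ee b)⁻¹) := hm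
        _ = ‖B‖ * ‖B⁻¹‖ * (ee b * (ee b)⁻¹) := by ring
        _ = ‖B‖ * ‖B⁻¹‖ := by rw [mul_inv_cancel₀ h4.ne', mul_one]
    have h6 : ‖B‖ * ‖B⁻¹‖ ≤ Z := by
      rw [hZdef]
      exact mul_le_mul hBn hBinvn hBinvnn (by linarith)
    have h7 : (u b) ⬝ᵥ (u b) ≤ Real.sqrt Z :=
      Real.le_sqrt_of_sq_le (le_trans h5 h6)
    calc en (u b) = Real.sqrt ((u b) ⬝ᵥ (u b)) := rfl
      _ ≤ Real.sqrt (Real.sqrt Z) := Real.sqrt_le_sqrt h7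
      _ = K := hKdef.symm
  -- bound on entries of R
  have hRbound : ∀ a b, |R a b| ≤ ‖S⁻¹‖ * ‖H‖ * K := by
    intro a b
    have hcolent : (R *ᵥ Pi.single b 1) a = R a b := by simp
    have h1 : |R a b| ≤ en (R *ᵥ Pi.single b 1) := by
      have h := abs_entry_le_en (R *ᵥ Pi.single b 1) a
      rwa [hcolent] at h
    have h2 : R *ᵥ Pi.single b 1 = S⁻¹ *ᵥ (Jmᵀ *ᵥ (H *ᵥ (u b))) := by
      rw [hRdef, ← Matrix.mulVec_mulVec, ← Matrix.mulVec_mulVec, ← Matrix.mulVec_mulVec]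
    have h4 : en (Jmᵀ *ᵥ (H *ᵥ (u b))) = en (H *ᵥ (u b)) := by
      rw [hJm]; exact en_Jt_mulVec _
    calc |R a b| ≤ en (R *ᵥ Pi.single b 1) := h1
      _ = en (S⁻¹ *ᵥ (Jmᵀ *ᵥ (H *ᵥ (u b)))) := by rw [h2]
      _ ≤ ‖S⁻¹‖ * en (Jmᵀ *ᵥ (H *ᵥ (u b))) := en_mulVec_le _ _
      _ = ‖S⁻¹‖ * en (H *ᵥ (u b)) := by rw [h4]
      _ ≤ ‖S⁻¹‖ * (‖H‖ * en (u b)) :=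
          mul_le_mul_of_nonneg_left (en_mulVec_le _ _) (norm_nonneg _)
      _ ≤ ‖S⁻¹‖ * (‖H‖ * K) := by
          refine mul_le_mul_of_nonneg_left ?_ (norm_nonneg _)
          exact mul_le_mul_of_nonneg_left (hcol b) hHnn
      _ = ‖S⁻¹‖ * ‖H‖ * K := by ring
  -- block entries
  have hM1 : Jmᵀ * Dh = Matrix.fromBlocks 0 (-(Matrix.diagonal d)) (Matrix.diagonal d) 0 := by
    rw [hJm, J'_transpose, hDhdef, Matrix.fromBlocks_multiply]
    simp
  have hM2 : Jmᵀ * De = Matrix.fromBlocks 0 (-(Matrix.diagonal e)) (Matrix.diagonal e) 0 := by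
    rw [hJm, J'_transpose, hDedef, Matrix.fromBlocks_multiply]
    simp
  have hentryid : ∀ j k : Fin n,
      (d j + e k) * (T (Sum.inl j) (Sum.inl k) - T (Sum.inr j) (Sum.inr k))
        = -(R (Sum.inl j) (Sum.inr k) + R (Sum.inr j) (Sum.inl k)) := by
    intro j k
    have h12 := congrFun (congrFun hCfinal (Sum.inl j)) (Sum.inr k)
    have h21 := congrFun (congrFun hCfinal (Sum.inr j)) (Sum.inl k)
    have e1 : (Jmᵀ * Dh * T) (Sum.inl j) (Sum.inr k) = -(d j * T (Sum.inr j) (Sum.inr k)) := by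
      rw [Matrix.mul_apply, hM1]
      rw [Fintype.sum_sum_type]
      simp [Matrix.diagonal_apply, ite_mul, Finset.sum_ite_eq, Finset.sum_ite_eq']
    have e2 : (T * (Jmᵀ * De)) (Sum.inl j) (Sum.inr k)
        = -(T (Sum.inl j) (Sum.inl k) * e k) := by
      rw [Matrix.mul_apply, hM2]
      rw [Fintype.sum_sum_type]
      simp [Matrix.diagonal_apply, mul_ite, Finset.sum_ite_eq, Finset.sum_ite_eq']
    have e3 : (Jmᵀ * Dh * T) (Sum.inr j) (Sum.inl k) = d j * T (Sum.inl j) (Sum.inl k) := by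
      rw [Matrix.mul_apply, hM1]
      rw [Fintype.sum_sum_type]
      simp [Matrix.diagonal_apply, ite_mul, Finset.sum_ite_eq, Finset.sum_ite_eq']
    have e4 : (T * (Jmᵀ * De)) (Sum.inr j) (Sum.inl k)
        = T (Sum.inr j) (Sum.inr k) * e k := by
      rw [Matrix.mul_apply, hM2]
      rw [Fintype.sum_sum_type]
      simp [Matrix.diagonal_apply, mul_ite, Finset.sum_ite_eq, Finset.sum_ite_eq']
    rw [Matrix.sub_apply, e1, e2, Matrix.neg_apply] at h12
    rw [Matrix.sub_apply, e3, e4, Matrix.neg_apply] at h21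
    linear_combination h12 + h21
  -- final assembly
  obtain ⟨j0, hj0⟩ := hμd i
  have hdminle : dmin ≤ μ i := by
    rw [← hj0, hdmindef]
    exact hd (show (⟨0, hn⟩ : Fin n) ≤ j0 from by simp [Fin.le_def])
  have hentrybound : ∀ j k : {a : Fin n // d a = μ i},
      |T (Sum.inl j.1) (Sum.inl k.1) - T (Sum.inr j.1) (Sum.inr k.1)|
        ≤ 2 * (‖S⁻¹‖ * ‖H‖ * K) / dmin := by
    intro j k
    have hid := hentryid j.1 k.1
    have hsum : dmin ≤ d j.1 + e k.1 := by
      have hjv : d j.1 = μ i := j.2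
      have he := hepos k.1
      linarith [hdminle]
    have hRa := hRbound (Sum.inl j.1) (Sum.inr k.1)
    have hRb := hRbound (Sum.inr j.1) (Sum.inl k.1)
    have h0 : 0 < d j.1 + e k.1 := lt_of_lt_of_le hdminpos hsum
    have habs : (d j.1 + e k.1) *
        |T (Sum.inl j.1) (Sum.inl k.1) - T (Sum.inr j.1) (Sum.inr k.1)|
          ≤ 2 * (‖S⁻¹‖ * ‖H‖ * K) := by
      rw [← abs_of_pos h0, ← abs_mul, hid, abs_neg]
      calc |R (Sum.inl j.1) (Sum.inr k.1) + R (Sum.inr j.1) (Sum.inl k.1)|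
          ≤ |R (Sum.inl j.1) (Sum.inr k.1)| + |R (Sum.inr j.1) (Sum.inl k.1)| := abs_add_le _ _
        _ ≤ 2 * (‖S⁻¹‖ * ‖H‖ * K) := by linarith
    rw [le_div_iff₀ hdminpos]
    calc |T (Sum.inl j.1) (Sum.inl k.1) - T (Sum.inr j.1) (Sum.inr k.1)| * dmin
        = dmin * |T (Sum.inl j.1) (Sum.inl k.1) - T (Sum.inr j.1) (Sum.inr k.1)| := mul_comm _ _
      _ ≤ (d j.1 + e k.1) *
          |T (Sum.inl j.1) (Sum.inl k.1) - T (Sum.inr j.1) (Sum.inr k.1)| :=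
          mul_le_mul_of_nonneg_right hsum (abs_nonneg _)
      _ ≤ 2 * (‖S⁻¹‖ * ‖H‖ * K) := habs
  set G := (T.submatrix
      (fun a : {a : Fin n // d a = μ i} => (Sum.inl a.val : Fin n ⊕ Fin n))
      (fun a : {a : Fin n // d a = μ i} => (Sum.inl a.val : Fin n ⊕ Fin n)) -
    T.submatrix
      (fun a : {a : Fin n // d a = μ i} => (Sum.inr a.val : Fin n ⊕ Fin n))
      (fun a : {a : Fin n // d a = μ i} => (Sum.inr a.val : Fin n ⊕ Fin n))) with hGdef
  show ‖G‖ ≤ c * ‖H‖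
  have hGentry : ∀ j k : {a : Fin n // d a = μ i},
      |G j k| ≤ 2 * (‖S⁻¹‖ * ‖H‖ * K) / dmin := by
    intro j k
    have h := hentrybound j k
    simpa [hGdef, Matrix.sub_apply, Matrix.submatrix_apply] using h
  have hcard0 : ((Fintype.card {a : Fin n // d a = μ i}) : ℝ) ≤ (n : ℝ) := by
    have h := Fintype.card_subtype_le (fun a : Fin n => d a = μ i)
    rw [Fintype.card_fin] at h
    exact_mod_cast h
  obtain ⟨κ, hκ⟩ : ∃ κ : ℝ, ((Fintype.card {a : Fin n // d a = μ i}) : ℝ) = κ := ⟨_, rfl⟩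
  have hcard : κ ≤ (n : ℝ) := hκ ▸ hcard0
  have hcardnn : (0:ℝ) ≤ κ := hκ ▸ (by positivity)
  have hsum1 : ‖G‖ ≤ κ * (κ * (2 * (‖S⁻¹‖ * ‖H‖ * K) / dmin)) := by
    calc ‖G‖ ≤ ∑ a : {a : Fin n // d a = μ i}, ∑ b : {a : Fin n // d a = μ i}, |G a b| :=
        opNorm_le_sum_abs G
      _ ≤ ∑ _a : {a : Fin n // d a = μ i}, ∑ _b : {a : Fin n // d a = μ i},
          (2 * (‖S⁻¹‖ * ‖H‖ * K) / dmin) :=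
        Finset.sum_le_sum fun a _ => Finset.sum_le_sum fun b _ => hGentry a b
      _ = κ * (κ * (2 * (‖S⁻¹‖ * ‖H‖ * K) / dmin)) := by
        simp only [Finset.sum_const, Finset.card_univ, nsmul_eq_mul]
        rw [hκ]
  have hSinvnn : (0:ℝ) ≤ ‖S⁻¹‖ := norm_nonneg _
  have hcoef : κ *
      (κ * (2 * (‖S⁻¹‖ * K) / dmin))
        ≤ (n : ℝ) * (n : ℝ) * (2 * (‖S⁻¹‖ + 1) * (K + 1) / dmin) := by
    have h1 : ‖S⁻¹‖ * K ≤ (‖S⁻¹‖ + 1) * (K + 1) := by nlinarith [hSinvnn, hKnn]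
    have h2 : 2 * (‖S⁻¹‖ * K) / dmin ≤ 2 * (‖S⁻¹‖ + 1) * (K + 1) / dmin := by
      exact (div_le_div_iff_of_pos_right hdminpos).mpr (by linarith [h1])
    have hq1nn : (0:ℝ) ≤ 2 * (‖S⁻¹‖ * K) / dmin := div_nonneg (by positivity) hdminnn
    have hnn' : (0:ℝ) ≤ (n:ℝ) := Nat.cast_nonneg n
    have hcc : κ *
        κ ≤ (n:ℝ) * (n:ℝ) :=
      mul_le_mul hcard hcard hcardnn hnn'
    calc κ * (κ * (2 * (‖S⁻¹‖ * K) / dmin)) = (κ * κ) * (2 * (‖S⁻¹‖ * K) / dmin) := by ring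
      _ ≤ ((n:ℝ) * (n:ℝ)) * (2 * (‖S⁻¹‖ * K) / dmin) := mul_le_mul_of_nonneg_right hcc hq1nn
      _ ≤ ((n:ℝ) * (n:ℝ)) * (2 * (‖S⁻¹‖ + 1) * (K + 1) / dmin) :=
          mul_le_mul_of_nonneg_left h2 (mul_nonneg hnn' hnn')
  calc ‖G‖ ≤ κ *
      (κ * (2 * (‖S⁻¹‖ * ‖H‖ * K) / dmin)) := hsum1
    _ = (κ *
      (κ * (2 * (‖S⁻¹‖ * K) / dmin))) * ‖H‖ := by
        ring
    _ ≤ ((n : ℝ) * (n : ℝ) * (2 * (‖S⁻¹‖ + 1) * (K + 1) / dmin)) * ‖H‖ :=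
        mul_le_mul_of_nonneg_right hcoef hHnn
    _ ≤ c * ‖H‖ := by
        rw [hcdef]
        exact mul_le_mul_of_nonneg_right (by linarith) hHnn
end

section
/- First-order antisymmetry of off-diagonal symplectic sub-blocks (equation (7) of Proposition 1): Let A be a 2n×2n real positive definite matrix with distinct symplectic eigenvalues μ₁ < ⋯ < μ_r and index sets α_i = {j : d_j(A) = μ_i}, β_i = {j + n : j ∈ α_i}. Let S ∈ Sp(2n; A) be fixed. Then there exist constants c > 0 and δ > 0 such that for every 2n×2n real symmetric matrix H with ‖H‖ < δ and A + H positive definite, every S̃ ∈ Sp(2n; A+H), and every i = 1, …, r, one has ‖(S⁻¹S̃)_{α_i β_i} + (S⁻¹S̃)_{β_i α_i}‖ ≤ c‖H‖. -/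
open Matrix
open scoped Matrix.Norms.L2Operator Classical

local notation "eqv" ι => WithLp.equiv 2 (ι → ℝ)

set_option linter.unusedSectionVars false

section Algebra

variable {m : Type*} [Fintype m] [DecidableEq m]

lemma J'_mul_J' : J' m * J' m = -1 := by
  simp only [J', Matrix.fromBlocks_multiply]
  ext (i|i) (j|j) <;> simp [Matrix.one_apply]

lemma J'_transpose : (J' m)ᵀ = -(J' m) := by
  simp only [J', Matrix.fromBlocks_transpose]
  ext (i|i) (j|j) <;> simp

variable {P : Matrix (m ⊕ m) (m ⊕ m) ℝ}

lemma sympl_left_inv (hP : Pᵀ * J' m * P = J' m) : (-(J' m * Pᵀ * J' m)) * P = 1 := by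
  have h : J' m * (Pᵀ * J' m * P) = J' m * J' m := by rw [hP]
  rw [J'_mul_J'] at h
  calc (-(J' m * Pᵀ * J' m)) * P = -(J' m * (Pᵀ * J' m * P)) := by noncomm_ring
    _ = 1 := by rw [h]; simp

lemma sympl_inv_eq (hP : Pᵀ * J' m * P = J' m) : P⁻¹ = -(J' m * Pᵀ * J' m) :=
  Matrix.inv_eq_left_inv (sympl_left_inv hP)

lemma sympl_right_inv (hP : Pᵀ * J' m * P = J' m) : P * (-(J' m * Pᵀ * J' m)) = 1 :=
  mul_eq_one_comm.mp (sympl_left_inv hP)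

lemma sympl_det (hP : Pᵀ * J' m * P = J' m) : IsUnit P.det :=
  Matrix.isUnit_det_of_right_inverse (sympl_right_inv hP)

lemma sympl_other (hP : Pᵀ * J' m * P = J' m) : P * J' m * Pᵀ = J' m := by
  have h1 := sympl_right_inv hP
  have h2 : P * J' m * Pᵀ * (J' m * J' m) = -(J' m) := by
    calc P * J' m * Pᵀ * (J' m * J' m)
        = (P * (-(J' m * Pᵀ * J' m))) * (-(J' m)) := by noncomm_ring
      _ = -(J' m) := by rw [h1]; simp
  rw [J'_mul_J'] at h2
  simpa using h2

lemma key_identity (S S' A H : Matrix (m ⊕ m) (m ⊕ m) ℝ) (d e : m → ℝ)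
    (hS : Sᵀ * J' m * S = J' m) (hS' : S'ᵀ * J' m * S' = J' m)
    (hSA : Sᵀ * A * S = Matrix.fromBlocks (diagonal d) 0 0 (diagonal d))
    (hS'A : S'ᵀ * (A + H) * S' = Matrix.fromBlocks (diagonal e) 0 0 (diagonal e)) :
    diagonal (Sum.elim d d) * (S⁻¹ * S')
      + J' m * (S⁻¹ * S') * J' m * diagonal (Sum.elim e e)
      = J' m * S⁻¹ * J' m * H * S' := by
  set T := S⁻¹ * S' with hTdef
  have hdS := sympl_det hS
  have hS1 : S * S⁻¹ = 1 := Matrix.mul_nonsing_inv S hdS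
  have hS2 : S⁻¹ * S = 1 := Matrix.nonsing_inv_mul S hdS
  have hA_eq : A = (S⁻¹)ᵀ * diagonal (Sum.elim d d) * S⁻¹ := by
    calc A = (S * S⁻¹)ᵀ * A * (S * S⁻¹) := by rw [hS1]; simp
      _ = (S⁻¹)ᵀ * (Sᵀ * A * S) * S⁻¹ := by
          rw [Matrix.transpose_mul]; noncomm_ring
      _ = (S⁻¹)ᵀ * diagonal (Sum.elim d d) * S⁻¹ := by
          rw [hSA, Matrix.fromBlocks_diagonal]
  have hTDT : Tᵀ * diagonal (Sum.elim d d) * T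
      = diagonal (Sum.elim e e) - S'ᵀ * H * S' := by
    calc Tᵀ * diagonal (Sum.elim d d) * T
        = S'ᵀ * ((S⁻¹)ᵀ * diagonal (Sum.elim d d) * S⁻¹) * S' := by
          rw [hTdef, Matrix.transpose_mul]; noncomm_ring
      _ = S'ᵀ * A * S' := by rw [← hA_eq]
      _ = S'ᵀ * (A + H) * S' - S'ᵀ * H * S' := by noncomm_ring
      _ = diagonal (Sum.elim e e) - S'ᵀ * H * S' := by
          rw [hS'A, Matrix.fromBlocks_diagonal]
  have hJinv : (S⁻¹)ᵀ * J' m * S⁻¹ = J' m := by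
    calc (S⁻¹)ᵀ * J' m * S⁻¹ = (S⁻¹)ᵀ * (Sᵀ * J' m * S) * S⁻¹ := by rw [hS]
      _ = (S * S⁻¹)ᵀ * J' m * (S * S⁻¹) := by
          rw [Matrix.transpose_mul]; noncomm_ring
      _ = J' m := by rw [hS1]; simp
  have hT : Tᵀ * J' m * T = J' m := by
    calc Tᵀ * J' m * T = S'ᵀ * ((S⁻¹)ᵀ * J' m * S⁻¹) * S' := by
          rw [hTdef, Matrix.transpose_mul]; noncomm_ring
      _ = J' m := by rw [hJinv]; exact hS'
  have hTl : Tᵀ * (-(J' m * T * J' m)) = 1 := by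
    calc Tᵀ * (-(J' m * T * J' m)) = -((Tᵀ * J' m * T) * J' m) := by noncomm_ring
      _ = -(J' m * J' m) := by rw [hT]
      _ = 1 := by rw [J'_mul_J']; simp
  have hTl' : (-(J' m * T * J' m)) * Tᵀ = 1 := mul_eq_one_comm.mp hTl
  have step : diagonal (Sum.elim d d) * T
      = (-(J' m * T * J' m)) * (diagonal (Sum.elim e e) - S'ᵀ * H * S') := by
    calc diagonal (Sum.elim d d) * T
        = ((-(J' m * T * J' m)) * Tᵀ) * (diagonal (Sum.elim d d) * T) := by
          rw [hTl']; simp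
      _ = (-(J' m * T * J' m)) * (Tᵀ * diagonal (Sum.elim d d) * T) := by noncomm_ring
      _ = (-(J' m * T * J' m)) * (diagonal (Sum.elim e e) - S'ᵀ * H * S') := by rw [hTDT]
  have final : J' m * T * J' m * (S'ᵀ * H * S') = J' m * S⁻¹ * J' m * H * S' := by
    calc J' m * T * J' m * (S'ᵀ * H * S')
        = J' m * S⁻¹ * (S' * J' m * S'ᵀ) * (H * S') := by rw [hTdef]; noncomm_ring
      _ = J' m * S⁻¹ * J' m * H * S' := by rw [sympl_other hS']; noncomm_ring
  rw [step, ← final]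
  noncomm_ring

lemma JTJ (T : Matrix (m ⊕ m) (m ⊕ m) ℝ) :
    J' m * T * J' m = Matrix.fromBlocks (-(T.toBlocks₂₂)) T.toBlocks₂₁ T.toBlocks₁₂
      (-(T.toBlocks₁₁)) := by
  conv_lhs => rw [← Matrix.fromBlocks_toBlocks T]
  simp [J', Matrix.fromBlocks_multiply]

lemma entry_sum (T G : Matrix (m ⊕ m) (m ⊕ m) ℝ) (d e : m → ℝ)
    (hG : diagonal (Sum.elim d d) * T + J' m * T * J' m * diagonal (Sum.elim e e) = G)
    (a b : m) :
    (d a + e b) * (T (Sum.inl a) (Sum.inr b) + T (Sum.inr a) (Sum.inl b))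
      = G (Sum.inl a) (Sum.inr b) + G (Sum.inr a) (Sum.inl b) := by
  rw [JTJ] at hG
  have e1 := congrFun (congrFun hG (Sum.inl a)) (Sum.inr b)
  have e2 := congrFun (congrFun hG (Sum.inr a)) (Sum.inl b)
  simp only [Matrix.add_apply, Matrix.diagonal_mul, Matrix.mul_diagonal,
    Matrix.fromBlocks_apply₁₂, Matrix.fromBlocks_apply₂₁, Matrix.toBlocks₂₁,
    Matrix.toBlocks₁₂, Matrix.of_apply, Sum.elim_inl, Sum.elim_inr] at e1 e2
  linear_combination e1 + e2

end Algebra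

section Norms

variable {ι κ : Type*} [Fintype ι] [Fintype κ] [DecidableEq ι] [DecidableEq κ]

lemma norm_symm_le_sum (y : ι → ℝ) :
    ‖(eqv ι).symm y‖ ≤ ∑ i, |y i| := by
  rw [EuclideanSpace.norm_eq]
  have h1 : ∑ i, ‖(eqv ι).symm y i‖ ^ 2 ≤ (∑ i, |y i|) ^ 2 := by
    have := Finset.sum_sq_le_sq_sum_of_nonneg (s := Finset.univ)
      (f := fun i => |y i|) (fun i _ => abs_nonneg _)
    simpa [Real.norm_eq_abs, sq_abs] using this
  calc Real.sqrt (∑ i, ‖(eqv ι).symm y i‖ ^ 2) ≤ Real.sqrt ((∑ i, |y i|) ^ 2) :=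
        Real.sqrt_le_sqrt h1
    _ = ∑ i, |y i| := Real.sqrt_sq (by positivity)

lemma abs_apply_le_norm (y : ι → ℝ) (a : ι) : |y a| ≤ ‖(eqv ι).symm y‖ := by
  rw [EuclideanSpace.norm_eq]
  have h1 : |y a| ^ 2 ≤ ∑ i, ‖(eqv ι).symm y i‖ ^ 2 := by
    have := Finset.single_le_sum (f := fun i => ‖(eqv ι).symm y i‖ ^ 2)
      (fun i _ => by positivity) (Finset.mem_univ a)
    simpa [Real.norm_eq_abs, sq_abs] using this
  calc |y a| = Real.sqrt (|y a| ^ 2) := (Real.sqrt_sq (abs_nonneg _)).symm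
    _ ≤ _ := Real.sqrt_le_sqrt h1

lemma opNorm_le_of_forall (M : Matrix κ ι ℝ) {C : ℝ} (hC : 0 ≤ C)
    (h : ∀ x : ι → ℝ, ‖(eqv κ).symm (M *ᵥ x)‖ ≤ C * ‖(eqv ι).symm x‖) : ‖M‖ ≤ C := by
  rw [Matrix.l2_opNorm_def]
  refine ContinuousLinearMap.opNorm_le_bound _ hC fun x => ?_
  have hx := h ((eqv ι) x)
  simpa [Matrix.toEuclideanLin_apply] using hx

lemma mulVec_norm_le (M : Matrix κ ι ℝ) (x : ι → ℝ) :
    ‖(eqv κ).symm (M *ᵥ x)‖ ≤ ‖M‖ * ‖(eqv ι).symm x‖ := by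
  have := Matrix.l2_opNorm_mulVec M ((eqv ι).symm x)
  simpa [EuclideanSpace.equiv] using this

lemma entry_le_norm (M : Matrix κ ι ℝ) (a : κ) (b : ι) : |M a b| ≤ ‖M‖ := by
  have h1 : |M a b| ≤ ‖(eqv κ).symm (M *ᵥ Pi.single b 1)‖ := by
    have := abs_apply_le_norm (M *ᵥ Pi.single b 1) a
    simpa using this
  have h2 := mulVec_norm_le M (Pi.single b 1)
  have h3 : ‖(eqv ι).symm (Pi.single b (1:ℝ))‖ = 1 := by
    rw [WithLp.equiv_symm_apply, PiLp.toLp_single]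
    simpa using EuclideanSpace.norm_single (𝕜 := ℝ) b 1
  rw [h3, mul_one] at h2
  exact h1.trans h2

lemma norm_le_sum_abs (M : Matrix κ ι ℝ) : ‖M‖ ≤ ∑ a, ∑ b, |M a b| := by
  refine opNorm_le_of_forall M (by positivity) fun x => ?_
  calc ‖(eqv κ).symm (M *ᵥ x)‖ ≤ ∑ a, |(M *ᵥ x) a| := norm_symm_le_sum _
    _ ≤ ∑ a, (∑ b, |M a b|) * ‖(eqv ι).symm x‖ := by
        refine Finset.sum_le_sum fun a _ => ?_
        calc |(M *ᵥ x) a| = |∑ b, M a b * x b| := by rw [Matrix.mulVec, dotProduct]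
          _ ≤ ∑ b, |M a b * x b| := Finset.abs_sum_le_sum_abs _ _
          _ ≤ ∑ b, |M a b| * ‖(eqv ι).symm x‖ := by
              refine Finset.sum_le_sum fun b _ => ?_
              rw [abs_mul]
              exact mul_le_mul_of_nonneg_left (abs_apply_le_norm x b) (abs_nonneg _)
          _ = (∑ b, |M a b|) * ‖(eqv ι).symm x‖ := by rw [Finset.sum_mul]
    _ = (∑ a, ∑ b, |M a b|) * ‖(eqv ι).symm x‖ := by rw [Finset.sum_mul]

open scoped RealInnerProductSpace in
lemma dot_eq_inner (x y : ι → ℝ) :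
    x ⬝ᵥ y = ⟪(eqv ι).symm x, (eqv ι).symm y⟫ := by
  rw [WithLp.equiv_symm_apply, EuclideanSpace.inner_toLp_toLp]
  simp [dotProduct_comm]

open scoped RealInnerProductSpace in
lemma quad_abs_le (M : Matrix ι ι ℝ) (x : ι → ℝ) :
    |x ⬝ᵥ (M *ᵥ x)| ≤ ‖M‖ * ‖(eqv ι).symm x‖ ^ 2 := by
  rw [dot_eq_inner]
  calc |⟪(eqv ι).symm x, (eqv ι).symm (M *ᵥ x)⟫|
      ≤ ‖(eqv ι).symm x‖ * ‖(eqv ι).symm (M *ᵥ x)‖ := abs_real_inner_le_norm _ _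
    _ ≤ ‖(eqv ι).symm x‖ * (‖M‖ * ‖(eqv ι).symm x‖) := by
        refine mul_le_mul_of_nonneg_left ?_ (norm_nonneg _)
        exact mulVec_norm_le M x
    _ = ‖M‖ * ‖(eqv ι).symm x‖ ^ 2 := by ring

open scoped RealInnerProductSpace in
lemma posdef_lambda [Nonempty ι] (A : Matrix ι ι ℝ) (hA : A.PosDef) :
    ∃ lam > 0, ∀ x : ι → ℝ, lam * ‖(eqv ι).symm x‖ ^ 2 ≤ x ⬝ᵥ (A *ᵥ x) := by
  classical
  set E := EuclideanSpace ℝ ι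
  set f : E → ℝ := fun x => ((eqv ι) x) ⬝ᵥ (A *ᵥ ((eqv ι) x)) with hf
  have hfc : Continuous f := by
    have h1 : f = fun x : E => ⟪x, (Matrix.toEuclideanCLM (𝕜 := ℝ) A) x⟫ := by
      funext x
      rw [hf]
      rw [EuclideanSpace.inner_eq_star_dotProduct, Matrix.ofLp_toEuclideanCLM]
      simp [Matrix.toLin'_apply, dotProduct_comm]
    rw [h1]
    exact continuous_id.inner (Matrix.toEuclideanCLM (𝕜 := ℝ) A).continuous
  have hsph : IsCompact (Metric.sphere (0 : E) 1) := isCompact_sphere _ _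
  have hne : (Metric.sphere (0 : E) 1).Nonempty := by
    refine ⟨(eqv ι).symm (Pi.single (Classical.arbitrary ι) 1), ?_⟩
    simp only [Metric.mem_sphere, dist_zero_right]
    rw [WithLp.equiv_symm_apply, PiLp.toLp_single, EuclideanSpace.norm_single]
    exact norm_one
  obtain ⟨z, hz, hmin⟩ := hsph.exists_isMinOn hne hfc.continuousOn
  have hz1 : ‖z‖ = 1 := by simpa using hz
  have hzne : (eqv ι) z ≠ 0 := by
    intro h
    have : z = 0 := by
      apply (eqv ι).injective
      simpa using h
    rw [this] at hz1; simp at hz1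
  have hlam : 0 < f z := by
    have := hA.dotProduct_mulVec_pos hzne
    simpa [hf] using this
  refine ⟨f z, hlam, fun x => ?_⟩
  by_cases hx : x = 0
  · simp [hx]
  · set t := ‖(eqv ι).symm x‖ with ht
    have htpos : 0 < t := by
      rw [ht, norm_pos_iff]
      intro h
      exact hx (by simpa using congrArg (eqv ι) h)
    set u : E := t⁻¹ • (eqv ι).symm x with hu
    have humem : u ∈ Metric.sphere (0 : E) 1 := by
      simp only [Metric.mem_sphere, dist_zero_right, hu, norm_smul]
      rw [← ht]
      simp [abs_of_pos htpos, inv_mul_cancel₀ htpos.ne']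
    have hfu := hmin humem
    have hfu' : f u = t⁻¹ * t⁻¹ * (x ⬝ᵥ (A *ᵥ x)) := by
      simp only [hf]
      have : (eqv ι) u = t⁻¹ • x := by
        rw [hu]
        simp
      rw [this, Matrix.mulVec_smul, smul_dotProduct, dotProduct_smul]
      simp [smul_smul]
      ring
    have : f z ≤ t⁻¹ * t⁻¹ * (x ⬝ᵥ (A *ᵥ x)) := by rw [← hfu']; exact hfu
    have key : t⁻¹ * t⁻¹ * (x ⬝ᵥ (A *ᵥ x)) = (x ⬝ᵥ (A *ᵥ x)) / t ^ 2 := by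
      rw [div_eq_mul_inv, pow_two, mul_inv]
      ring
    rw [key] at this
    exact (le_div_iff₀ (by positivity)).mp this

lemma sq_dot (v w : ι → ℝ) : v ⬝ᵥ (Matrix.diagonal w *ᵥ v) = ∑ i, w i * v i ^ 2 := by
  simp [dotProduct, Matrix.mulVec_diagonal]
  congr 1; funext i; ring

lemma norm_symm_sq (x : ι → ℝ) : ‖(eqv ι).symm x‖ ^ 2 = ∑ i, x i ^ 2 := by
  rw [EuclideanSpace.norm_eq, Real.sq_sqrt (by positivity)]
  congr 1; funext i
  simp [Real.norm_eq_abs, sq_abs]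

lemma conj_dot (S' M : Matrix ι ι ℝ) (x : ι → ℝ) :
    (S' *ᵥ x) ⬝ᵥ (M *ᵥ (S' *ᵥ x)) = x ⬝ᵥ ((S'ᵀ * M * S') *ᵥ x) := by
  calc (S' *ᵥ x) ⬝ᵥ (M *ᵥ (S' *ᵥ x))
      = (S' *ᵥ x) ⬝ᵥ ((M * S') *ᵥ x) := by rw [Matrix.mulVec_mulVec]
    _ = (x ᵥ* S'ᵀ) ⬝ᵥ ((M * S') *ᵥ x) := by rw [Matrix.vecMul_transpose]
    _ = x ⬝ᵥ ((S'ᵀ * M * S') *ᵥ x) := by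
        rw [← Matrix.dotProduct_mulVec, Matrix.mulVec_mulVec, mul_assoc]

end Norms

section EigBound

variable {m : Type*} [Fintype m] [DecidableEq m]

lemma sympl_eigs_le (M S' : Matrix (m ⊕ m) (m ⊕ m) ℝ) (e : m → ℝ)
    (hS' : S'ᵀ * J' m * S' = J' m)
    (hS'M : S'ᵀ * M * S' = Matrix.fromBlocks (diagonal e) 0 0 (diagonal e))
    (hepos : ∀ k, 0 < e k) (k : m) :
    e k ≤ ‖J' m * M‖ := by
  have hdet := sympl_det hS'
  have h1 : S' * S'⁻¹ = 1 := Matrix.mul_nonsing_inv _ hdet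
  have h2 : S'⁻¹ * S' = 1 := Matrix.nonsing_inv_mul _ hdet
  have hMeq : M = (S'⁻¹)ᵀ * diagonal (Sum.elim e e) * S'⁻¹ := by
    calc M = (S' * S'⁻¹)ᵀ * M * (S' * S'⁻¹) := by rw [h1]; simp
      _ = (S'⁻¹)ᵀ * (S'ᵀ * M * S') * S'⁻¹ := by rw [Matrix.transpose_mul]; noncomm_ring
      _ = _ := by rw [hS'M, Matrix.fromBlocks_diagonal]
  have hinvT : (S'⁻¹)ᵀ = -(J' m * S' * J' m) := by
    rw [sympl_inv_eq hS']
    simp only [Matrix.transpose_neg, Matrix.transpose_mul, Matrix.transpose_transpose,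
      J'_transpose]
    noncomm_ring
  have hcomm : J' m * M * S' = S' * (J' m * diagonal (Sum.elim e e)) := by
    calc J' m * M * S'
        = J' m * (S'⁻¹)ᵀ * diagonal (Sum.elim e e) * (S'⁻¹ * S') := by
          rw [hMeq]; noncomm_ring
      _ = J' m * (-(J' m * S' * J' m)) * diagonal (Sum.elim e e) := by
          rw [hinvT, h2, mul_one]
      _ = -((J' m * J' m) * S' * J' m * diagonal (Sum.elim e e)) := by noncomm_ring
      _ = S' * (J' m * diagonal (Sum.elim e e)) := by rw [J'_mul_J']; noncomm_ring
  set u := S' *ᵥ Pi.single (Sum.inl k) (1:ℝ) with hu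
  set v := S' *ᵥ Pi.single (Sum.inr k) (1:ℝ) with hv
  have hcolJE₂ : (J' m * diagonal (Sum.elim e e)) *ᵥ Pi.single (Sum.inr k) (1:ℝ)
      = (e k) • (Pi.single (Sum.inl k) 1 : (m ⊕ m) → ℝ) := by
    funext i
    rcases i with i | i <;>
      simp [Matrix.mulVec_single, Matrix.mul_diagonal, J', Pi.single_apply,
        Matrix.one_apply, eq_comm, mul_comm]
  have hcolJE₁ : (J' m * diagonal (Sum.elim e e)) *ᵥ Pi.single (Sum.inl k) (1:ℝ)
      = (-(e k)) • (Pi.single (Sum.inr k) 1 : (m ⊕ m) → ℝ) := by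
    funext i
    rcases i with i | i <;>
      simp [Matrix.mulVec_single, Matrix.mul_diagonal, J', Pi.single_apply,
        Matrix.one_apply, eq_comm, mul_comm] <;> split_ifs <;> simp
  have hcolv : (J' m * M) *ᵥ v = e k • u := by
    calc (J' m * M) *ᵥ v = (J' m * M * S') *ᵥ Pi.single (Sum.inr k) 1 := by
          rw [hv, Matrix.mulVec_mulVec]
      _ = (S' * (J' m * diagonal (Sum.elim e e))) *ᵥ Pi.single (Sum.inr k) 1 := by rw [hcomm]
      _ = S' *ᵥ ((J' m * diagonal (Sum.elim e e)) *ᵥ Pi.single (Sum.inr k) 1) := by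
          rw [Matrix.mulVec_mulVec]
      _ = S' *ᵥ ((e k) • (Pi.single (Sum.inl k) 1 : (m ⊕ m) → ℝ)) := by rw [hcolJE₂]
      _ = e k • u := by rw [Matrix.mulVec_smul, hu]
  have hcolu : (J' m * M) *ᵥ u = (-(e k)) • v := by
    calc (J' m * M) *ᵥ u = (J' m * M * S') *ᵥ Pi.single (Sum.inl k) 1 := by
          rw [hu, Matrix.mulVec_mulVec]
      _ = (S' * (J' m * diagonal (Sum.elim e e))) *ᵥ Pi.single (Sum.inl k) 1 := by rw [hcomm]
      _ = S' *ᵥ ((J' m * diagonal (Sum.elim e e)) *ᵥ Pi.single (Sum.inl k) 1) := by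
          rw [Matrix.mulVec_mulVec]
      _ = S' *ᵥ ((-(e k)) • (Pi.single (Sum.inr k) 1 : (m ⊕ m) → ℝ)) := by rw [hcolJE₁]
      _ = (-(e k)) • v := by rw [Matrix.mulVec_smul, hv]
  -- nonvanishing of u and v
  have hsingle_ne : ∀ j : m ⊕ m, (Pi.single j (1:ℝ) : (m ⊕ m) → ℝ) ≠ 0 := by
    intro j hj
    have := congrFun hj j
    simp at this
  have hune : ∀ (j : m ⊕ m) (w : (m ⊕ m) → ℝ), w = S' *ᵥ Pi.single j 1 → w ≠ 0 := by
    intro j w hw h0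
    have : S'⁻¹ *ᵥ (S' *ᵥ Pi.single j (1:ℝ)) = Pi.single j 1 := by
      rw [Matrix.mulVec_mulVec, h2, Matrix.one_mulVec]
    rw [← hw, h0] at this
    simp only [Matrix.mulVec_zero] at this
    exact hsingle_ne j this.symm
  have hup : 0 < ‖(eqv (m ⊕ m)).symm u‖ := by
    rw [norm_pos_iff]
    intro h
    exact hune _ u hu (by simpa using congrArg (eqv (m ⊕ m)) h)
  have hvp : 0 < ‖(eqv (m ⊕ m)).symm v‖ := by
    rw [norm_pos_iff]
    intro h
    exact hune _ v hv (by simpa using congrArg (eqv (m ⊕ m)) h)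
  have hb1 : e k * ‖(eqv (m ⊕ m)).symm u‖ ≤ ‖J' m * M‖ * ‖(eqv (m ⊕ m)).symm v‖ := by
    have h := mulVec_norm_le (J' m * M) v
    rw [hcolv, WithLp.equiv_symm_apply, WithLp.toLp_smul, norm_smul, Real.norm_eq_abs,
      abs_of_pos (hepos k)] at h
    exact h
  have hb2 : e k * ‖(eqv (m ⊕ m)).symm v‖ ≤ ‖J' m * M‖ * ‖(eqv (m ⊕ m)).symm u‖ := by
    have h := mulVec_norm_le (J' m * M) u
    rw [hcolu, WithLp.equiv_symm_apply, WithLp.toLp_smul, norm_smul, Real.norm_eq_abs, abs_neg,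
      abs_of_pos (hepos k)] at h
    exact h
  nlinarith [hepos k, norm_nonneg (J' m * M), hup, hvp]

end EigBound

set_option maxHeartbeats 2000000 in
/-- Equation (7) of Proposition 1: `(S⁻¹S̃)_{αᵢβᵢ} = −(S⁻¹S̃)_{βᵢαᵢ} + O(‖H‖)`, where
`αᵢ = {a : d a = μ i}` lives in the first copy of `Fin n` and `βᵢ` is the same set in the
second copy. -/
theorem offdiag_subblocks_first_order_antisymm (n r : ℕ)
    (A : Matrix (Fin n ⊕ Fin n) (Fin n ⊕ Fin n) ℝ) (hA : A.PosDef)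
    (d : Fin n → ℝ) (μ : Fin r → ℝ)
    (hd : Monotone d) (hdpos : ∀ j, 0 < d j) (hμ : StrictMono μ)
    (hdμ : ∀ j, ∃ i, d j = μ i) (hμd : ∀ i, ∃ j, d j = μ i)
    (S : Matrix (Fin n ⊕ Fin n) (Fin n ⊕ Fin n) ℝ)
    (hS : Sᵀ * J' (Fin n) * S = J' (Fin n))
    (hSA : Sᵀ * A * S = Matrix.fromBlocks (Matrix.diagonal d) 0 0 (Matrix.diagonal d)) :
    ∃ c > 0, ∃ δ > 0,
      ∀ H : Matrix (Fin n ⊕ Fin n) (Fin n ⊕ Fin n) ℝ, H.IsSymm → ‖H‖ < δ → (A + H).PosDef →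
      ∀ S' : Matrix (Fin n ⊕ Fin n) (Fin n ⊕ Fin n) ℝ,
        S'ᵀ * J' (Fin n) * S' = J' (Fin n) →
        (∃ e : Fin n → ℝ, Monotone e ∧ (∀ j, 0 < e j) ∧
          S'ᵀ * (A + H) * S' = Matrix.fromBlocks (Matrix.diagonal e) 0 0 (Matrix.diagonal e)) →
        ∀ i : Fin r,
          ‖(S⁻¹ * S').submatrix
              (fun a : {a : Fin n // d a = μ i} => (Sum.inl a.val : Fin n ⊕ Fin n))
              (fun a : {a : Fin n // d a = μ i} => (Sum.inr a.val : Fin n ⊕ Fin n)) +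
            (S⁻¹ * S').submatrix
              (fun a : {a : Fin n // d a = μ i} => (Sum.inr a.val : Fin n ⊕ Fin n))
              (fun a : {a : Fin n // d a = μ i} => (Sum.inl a.val : Fin n ⊕ Fin n))‖
            ≤ c * ‖H‖ := by
  classical
  rcases Nat.eq_zero_or_pos n with hn0 | hnpos
  · subst hn0
    refine ⟨1, one_pos, 1, one_pos, ?_⟩
    intro H _ _ _ S' _ _ i
    set X := (S⁻¹ * S').submatrix
        (fun a : {a : Fin 0 // d a = μ i} => (Sum.inl a.val : Fin 0 ⊕ Fin 0))
        (fun a : {a : Fin 0 // d a = μ i} => (Sum.inr a.val : Fin 0 ⊕ Fin 0)) +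
      (S⁻¹ * S').submatrix
        (fun a : {a : Fin 0 // d a = μ i} => (Sum.inr a.val : Fin 0 ⊕ Fin 0))
        (fun a : {a : Fin 0 // d a = μ i} => (Sum.inl a.val : Fin 0 ⊕ Fin 0)) with hXdef
    have hz : X = 0 := by
      ext a b
      exact a.1.elim0
    rw [hz, norm_zero]
    positivity
  -- main case
  haveI : Nonempty (Fin n ⊕ Fin n) := ⟨Sum.inl ⟨0, hnpos⟩⟩
  obtain ⟨lam, hlam_pos, hlam⟩ := posdef_lambda A hA
  set K : ℝ := ‖J' (Fin n) * S⁻¹ * J' (Fin n)‖ with hKdef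
  have hK0 : 0 ≤ K := norm_nonneg _
  set Emax : ℝ := ‖J' (Fin n)‖ * (‖A‖ + 1) with hEmaxdef
  have hEmax0 : 0 ≤ Emax := mul_nonneg (norm_nonneg _) (by positivity)
  have hfrac0 : 0 ≤ 2 * Emax / lam := div_nonneg (by linarith) hlam_pos.le
  set B : ℝ := Real.sqrt (2 * Emax / lam) with hBdef
  have hB0 : 0 ≤ B := Real.sqrt_nonneg _
  set m0 : ℝ := d ⟨0, hnpos⟩ with hm0def
  have hm0 : 0 < m0 := hdpos _
  have hc0 : 0 ≤ (n:ℝ) * (n:ℝ) * (2 / m0) * (K * B) :=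
    mul_nonneg (mul_nonneg (mul_nonneg (Nat.cast_nonneg n) (Nat.cast_nonneg n))
      (div_nonneg (by norm_num) hm0.le)) (mul_nonneg hK0 hB0)
  refine ⟨(n:ℝ) * (n:ℝ) * (2 / m0) * (K * B) + 1, by linarith, min (lam / 2) 1,
    lt_min (by linarith) one_pos, ?_⟩
  intro H hHsym hHnorm hAH S' hS'sympl hex i
  obtain ⟨e, hemono, hepos, hS'A⟩ := hex
  have hH1 : ‖H‖ ≤ lam / 2 := ((lt_min_iff.mp hHnorm).1).le
  have hH2 : ‖H‖ ≤ 1 := ((lt_min_iff.mp hHnorm).2).le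
  -- quadratic lower bound for A + H
  have hquadM : ∀ x : (Fin n ⊕ Fin n) → ℝ,
      lam / 2 * ‖(eqv (Fin n ⊕ Fin n)).symm x‖ ^ 2 ≤ x ⬝ᵥ ((A + H) *ᵥ x) := by
    intro x
    have h1 := hlam x
    have h2 := (abs_le.mp (quad_abs_le H x)).1
    have h3 : ‖H‖ * ‖(eqv (Fin n ⊕ Fin n)).symm x‖ ^ 2
        ≤ lam / 2 * ‖(eqv (Fin n ⊕ Fin n)).symm x‖ ^ 2 :=
      mul_le_mul_of_nonneg_right hH1 (sq_nonneg _)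
    have h4 : x ⬝ᵥ ((A + H) *ᵥ x) = x ⬝ᵥ (A *ᵥ x) + x ⬝ᵥ (H *ᵥ x) := by
      rw [Matrix.add_mulVec, dotProduct_add]
    rw [h4]
    linarith
  -- eigenvalue upper bound
  have heEmax : ∀ k, e k ≤ Emax := by
    intro k
    have h1 := sympl_eigs_le (A + H) S' e hS'sympl hS'A hepos k
    have h2 : ‖J' (Fin n) * (A + H)‖ ≤ Emax := by
      calc ‖J' (Fin n) * (A + H)‖ ≤ ‖J' (Fin n)‖ * ‖A + H‖ := Matrix.l2_opNorm_mul _ _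
        _ ≤ ‖J' (Fin n)‖ * (‖A‖ + 1) := by
            refine mul_le_mul_of_nonneg_left ?_ (norm_nonneg _)
            calc ‖A + H‖ ≤ ‖A‖ + ‖H‖ := norm_add_le _ _
              _ ≤ ‖A‖ + 1 := by linarith
        _ = Emax := hEmaxdef.symm
    linarith
  -- norm bound for S'
  have hS'norm : ‖S'‖ ≤ B := by
    refine opNorm_le_of_forall S' hB0 fun x => ?_
    have h1 := hquadM (S' *ᵥ x)
    rw [conj_dot, hS'A, Matrix.fromBlocks_diagonal] at h1
    have h2 : x ⬝ᵥ (diagonal (Sum.elim e e) *ᵥ x)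
        ≤ Emax * ‖(eqv (Fin n ⊕ Fin n)).symm x‖ ^ 2 := by
      rw [sq_dot, norm_symm_sq, Finset.mul_sum]
      refine Finset.sum_le_sum fun j _ => ?_
      have hj : Sum.elim e e j ≤ Emax := by rcases j with j | j <;> exact heEmax j
      exact mul_le_mul_of_nonneg_right hj (sq_nonneg _)
    have h4 : lam / 2 * ‖(eqv (Fin n ⊕ Fin n)).symm (S' *ᵥ x)‖ ^ 2
        ≤ Emax * ‖(eqv (Fin n ⊕ Fin n)).symm x‖ ^ 2 := le_trans h1 h2
    have h5 : ‖(eqv (Fin n ⊕ Fin n)).symm (S' *ᵥ x)‖ ^ 2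
        ≤ (2 * Emax / lam) * ‖(eqv (Fin n ⊕ Fin n)).symm x‖ ^ 2 := by
      have hmm : (2 / lam) * (lam / 2) = 1 := by field_simp
      calc ‖(eqv (Fin n ⊕ Fin n)).symm (S' *ᵥ x)‖ ^ 2
          = (2 / lam) * (lam / 2 * ‖(eqv (Fin n ⊕ Fin n)).symm (S' *ᵥ x)‖ ^ 2) := by
            rw [← mul_assoc, hmm, one_mul]
        _ ≤ (2 / lam) * (Emax * ‖(eqv (Fin n ⊕ Fin n)).symm x‖ ^ 2) :=
            mul_le_mul_of_nonneg_left h4 (by positivity)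
        _ = (2 * Emax / lam) * ‖(eqv (Fin n ⊕ Fin n)).symm x‖ ^ 2 := by ring
    have hBsq : (B * ‖(eqv (Fin n ⊕ Fin n)).symm x‖) ^ 2
        = (2 * Emax / lam) * ‖(eqv (Fin n ⊕ Fin n)).symm x‖ ^ 2 := by
      rw [mul_pow, hBdef, Real.sq_sqrt hfrac0]
    calc ‖(eqv (Fin n ⊕ Fin n)).symm (S' *ᵥ x)‖
        = Real.sqrt (‖(eqv (Fin n ⊕ Fin n)).symm (S' *ᵥ x)‖ ^ 2) :=
          (Real.sqrt_sq (norm_nonneg _)).symm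
      _ ≤ Real.sqrt ((B * ‖(eqv (Fin n ⊕ Fin n)).symm x‖) ^ 2) :=
          Real.sqrt_le_sqrt (by rw [hBsq]; exact h5)
      _ = B * ‖(eqv (Fin n ⊕ Fin n)).symm x‖ := Real.sqrt_sq (by positivity)
  -- the key identity and the norm of its right-hand side
  have hkey := key_identity S S' A H d e hS hS'sympl hSA hS'A
  have hGnorm : ‖J' (Fin n) * S⁻¹ * J' (Fin n) * H * S'‖ ≤ K * ‖H‖ * B := by
    calc ‖J' (Fin n) * S⁻¹ * J' (Fin n) * H * S'‖
        ≤ ‖J' (Fin n) * S⁻¹ * J' (Fin n) * H‖ * ‖S'‖ := Matrix.l2_opNorm_mul _ _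
      _ ≤ (K * ‖H‖) * ‖S'‖ :=
          mul_le_mul_of_nonneg_right (Matrix.l2_opNorm_mul _ _) (norm_nonneg _)
      _ ≤ K * ‖H‖ * B :=
          mul_le_mul_of_nonneg_left hS'norm (mul_nonneg hK0 (norm_nonneg _))
  -- entrywise bound
  have hentry : ∀ a b : Fin n,
      |(S⁻¹ * S') (Sum.inl a) (Sum.inr b) + (S⁻¹ * S') (Sum.inr a) (Sum.inl b)|
        ≤ 2 * (K * ‖H‖ * B) / m0 := by
    intro a b
    have hsum := entry_sum (S⁻¹ * S') _ d e hkey a b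
    have hg1 : |(J' (Fin n) * S⁻¹ * J' (Fin n) * H * S') (Sum.inl a) (Sum.inr b)|
        ≤ K * ‖H‖ * B := le_trans (entry_le_norm _ _ _) hGnorm
    have hg2 : |(J' (Fin n) * S⁻¹ * J' (Fin n) * H * S') (Sum.inr a) (Sum.inl b)|
        ≤ K * ‖H‖ * B := le_trans (entry_le_norm _ _ _) hGnorm
    have hda : m0 ≤ d a := hd (by simp [Fin.le_def])
    have hden : m0 ≤ d a + e b := by linarith [hepos b]
    have hdenpos : 0 < d a + e b := lt_of_lt_of_le hm0 hden
    set q := |(S⁻¹ * S') (Sum.inl a) (Sum.inr b) + (S⁻¹ * S') (Sum.inr a) (Sum.inl b)| with hq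
    have h5 : (d a + e b) * q ≤ 2 * (K * ‖H‖ * B) := by
      have h6 : (d a + e b) * q
          = |(J' (Fin n) * S⁻¹ * J' (Fin n) * H * S') (Sum.inl a) (Sum.inr b)
              + (J' (Fin n) * S⁻¹ * J' (Fin n) * H * S') (Sum.inr a) (Sum.inl b)| := by
        rw [hq, ← abs_of_pos hdenpos, ← abs_mul, hsum]
      rw [h6]
      calc |(J' (Fin n) * S⁻¹ * J' (Fin n) * H * S') (Sum.inl a) (Sum.inr b)
              + (J' (Fin n) * S⁻¹ * J' (Fin n) * H * S') (Sum.inr a) (Sum.inl b)|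
          ≤ |(J' (Fin n) * S⁻¹ * J' (Fin n) * H * S') (Sum.inl a) (Sum.inr b)|
              + |(J' (Fin n) * S⁻¹ * J' (Fin n) * H * S') (Sum.inr a) (Sum.inl b)| :=
            abs_add_le _ _
        _ ≤ 2 * (K * ‖H‖ * B) := by linarith
    have hq0 : 0 ≤ q := hq ▸ abs_nonneg _
    have h7 : m0 * q ≤ 2 * (K * ‖H‖ * B) := by
      have h8 : m0 * q ≤ (d a + e b) * q := mul_le_mul_of_nonneg_right hden hq0
      linarith
    rw [le_div_iff₀ hm0]
    linarith
  -- conclude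
  set X := (S⁻¹ * S').submatrix
      (fun a : {a : Fin n // d a = μ i} => (Sum.inl a.val : Fin n ⊕ Fin n))
      (fun a : {a : Fin n // d a = μ i} => (Sum.inr a.val : Fin n ⊕ Fin n)) +
    (S⁻¹ * S').submatrix
      (fun a : {a : Fin n // d a = μ i} => (Sum.inr a.val : Fin n ⊕ Fin n))
      (fun a : {a : Fin n // d a = μ i} => (Sum.inl a.val : Fin n ⊕ Fin n)) with hXdef
  have hXab : ∀ a b : {a : Fin n // d a = μ i}, |X a b| ≤ 2 * (K * ‖H‖ * B) / m0 := by
    intro a b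
    have : X a b = (S⁻¹ * S') (Sum.inl a.val) (Sum.inr b.val)
        + (S⁻¹ * S') (Sum.inr a.val) (Sum.inl b.val) := by
      rw [hXdef]
      simp [Matrix.add_apply, Matrix.submatrix_apply]
    rw [this]
    exact hentry a.val b.val
  have hcard : (Fintype.card {a : Fin n // d a = μ i} : ℝ) ≤ (n : ℝ) := by
    have h := Fintype.card_subtype_le (fun a : Fin n => d a = μ i)
    simp only [Fintype.card_fin] at h
    exact_mod_cast h
  have hcard0 : (0:ℝ) ≤ (Fintype.card {a : Fin n // d a = μ i} : ℝ) := Nat.cast_nonneg _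
  have hbound0 : (0:ℝ) ≤ 2 * (K * ‖H‖ * B) / m0 :=
    div_nonneg (by positivity) hm0.le
  calc ‖X‖ ≤ ∑ a, ∑ b, |X a b| := norm_le_sum_abs X
    _ ≤ ∑ _a : {a : Fin n // d a = μ i}, ∑ _b : {a : Fin n // d a = μ i},
          2 * (K * ‖H‖ * B) / m0 :=
        Finset.sum_le_sum fun a _ => Finset.sum_le_sum fun b _ => hXab a b
    _ = (Fintype.card {a : Fin n // d a = μ i} : ℝ)
          * (Fintype.card {a : Fin n // d a = μ i} : ℝ) * (2 * (K * ‖H‖ * B) / m0) := by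
        simp [Finset.sum_const, Finset.card_univ]
        ring
    _ ≤ (n:ℝ) * (n:ℝ) * (2 * (K * ‖H‖ * B) / m0) := by
        refine mul_le_mul_of_nonneg_right ?_ hbound0
        exact mul_le_mul hcard hcard hcard0 (Nat.cast_nonneg n)
    _ = ((n:ℝ) * (n:ℝ) * (2 / m0) * (K * B)) * ‖H‖ := by
        field_simp
    _ ≤ ((n:ℝ) * (n:ℝ) * (2 / m0) * (K * B) + 1) * ‖H‖ :=
        mul_le_mul_of_nonneg_right (by linarith) (norm_nonneg _)
end
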